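/- Assume P contains at least one pick vertex and G admits a tour subgraph. Then there exists a minimum-length tour subgraph T of G such that, for every aisle j, the vertical edges of T in aisle j form one of the six configurations 1pass, top, bottom, gap, 2pass, none, and, for every 1 ≤ j < n, the horizontal edges of T between aisles j and j+1 form one of the five configurations 11, 20, 02, 22, 00. -/

import Mathlib

/-- Degree parity class of a vertex: degree zero, odd degree, or even positive degree. -/
inductive DegClass : Type
  | zero : DegClass
  | odd : DegClass
  | evenPos : DegClass
deriving DecidableEq

/-- The parity class of a natural number (a degree). -/
def degClass (d : ℕ) : DegClass :=
  if d = 0 then .zero else if d % 2 = 1 then .odd else .evenPos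

/-- Names of the six vertical edge configurations. -/
inductive VCName : Type
  | onepass : VCName
  | top : VCName
  | bottom : VCName
  | gap : VCName
  | twopass : VCName
  | none : VCName
deriving DecidableEq

/-- Names of the five horizontal edge configurations. -/
inductive HCName : Type
  | h11 : HCName
  | h20 : HCName
  | h02 : HCName
  | h22 : HCName
  | h00 : HCName
deriving DecidableEq

/-- Number of copies of the back cross-aisle edge `a_j a_{j+1}` in a horizontal configuration. -/
def hcA : HCName → ℕ
  | .h11 => 1
  | .h20 => 2
  | .h02 => 0
  | .h22 => 2
  | .h00 => 0

/-- Number of copies of the front cross-aisle edge `b_j b_{j+1}` in a horizontal configuration. -/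
def hcB : HCName → ℕ
  | .h11 => 1
  | .h20 => 0
  | .h02 => 2
  | .h22 => 2
  | .h00 => 0

/-- The seven equivalence classes, as triples (parity of `a_j`, parity of `b_j`, #components). -/
def cUU1C : DegClass × DegClass × ℕ := (.odd, .odd, 1)
def c0E1C : DegClass × DegClass × ℕ := (.zero, .evenPos, 1)
def cE01C : DegClass × DegClass × ℕ := (.evenPos, .zero, 1)
def cEE1C : DegClass × DegClass × ℕ := (.evenPos, .evenPos, 1)
def cEE2C : DegClass × DegClass × ℕ := (.evenPos, .evenPos, 2)
def c000C : DegClass × DegClass × ℕ := (.zero, .zero, 0)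
def c001C : DegClass × DegClass × ℕ := (.zero, .zero, 1)

/-- A single-block parallel-aisle warehouse in the sense of Ratliff and Rosenthal:
`n ≥ 1` vertical pick aisles, two horizontal cross-aisles, `picks j` pick vertices
strictly inside aisle `j`, nonnegative edge lengths, and a depot located at some
cross-aisle vertex `a_j` (if `depotTop`) or `b_j`. -/
structure Warehouse where
  n : ℕ
  npos : 1 ≤ n
  picks : Fin n → ℕ
  vlen : (j : Fin n) → Fin (picks j + 1) → ℝ
  hlenA : Fin (n - 1) → ℝ
  hlenB : Fin (n - 1) → ℝ
  vlen_nonneg : ∀ j i, 0 ≤ vlen j i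
  hlenA_nonneg : ∀ k, 0 ≤ hlenA k
  hlenB_nonneg : ∀ k, 0 ≤ hlenB k
  depotAisle : Fin n
  depotTop : Bool

namespace Warehouse

variable (W : Warehouse)

/-- Vertices of the warehouse graph: in aisle `j`, position `0` is the back cross-aisle
vertex `a_j`, position `picks j + 1` is the front cross-aisle vertex `b_j`, and
positions `1, …, picks j` are the pick vertices of aisle `j`. -/
def V : Type := Σ j : Fin W.n, Fin (W.picks j + 2)

instance : DecidableEq W.V :=
  inferInstanceAs (DecidableEq (Σ j : Fin W.n, Fin (W.picks j + 2)))

instance : Fintype W.V :=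
  inferInstanceAs (Fintype (Σ j : Fin W.n, Fin (W.picks j + 2)))

/-- The back cross-aisle vertex `a_j`. -/
def aV (j : Fin W.n) : W.V := ⟨j, 0⟩

/-- The front cross-aisle vertex `b_j`. -/
def bV (j : Fin W.n) : W.V := ⟨j, Fin.last (W.picks j + 1)⟩

/-- The depot vertex `v₀`. -/
def depot : W.V := if W.depotTop then W.aV W.depotAisle else W.bV W.depotAisle

/-- `v` is a pick vertex, i.e. a vertex strictly inside an aisle. -/
def IsPick (v : W.V) : Prop := 0 < v.2.val ∧ v.2.val < W.picks v.1 + 1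

/-- `v` is a required vertex, i.e. a member of `P` (a pick vertex or the depot). -/
def Required (v : W.V) : Prop := W.IsPick v ∨ v = W.depot

/-- Edges of the warehouse graph: a vertical edge `⟨j, i⟩` joins positions `i` and
`i+1` of aisle `j`; horizontal edges `inr (inl k)` join `a_k a_{k+1}` and
`inr (inr k)` join `b_k b_{k+1}`. -/
def E : Type := (Σ j : Fin W.n, Fin (W.picks j + 1)) ⊕ (Fin (W.n - 1) ⊕ Fin (W.n - 1))

instance : DecidableEq W.E :=
  inferInstanceAs (DecidableEq ((Σ j : Fin W.n, Fin (W.picks j + 1)) ⊕ (Fin (W.n - 1) ⊕ Fin (W.n - 1))))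

instance : Fintype W.E :=
  inferInstanceAs (Fintype ((Σ j : Fin W.n, Fin (W.picks j + 1)) ⊕ (Fin (W.n - 1) ⊕ Fin (W.n - 1))))

/-- The left aisle of a horizontal edge index. -/
def leftAisle (k : Fin (W.n - 1)) : Fin W.n := ⟨k.val, by have := k.isLt; omega⟩

/-- The right aisle of a horizontal edge index. -/
def rightAisle (k : Fin (W.n - 1)) : Fin W.n := ⟨k.val + 1, by have := k.isLt; omega⟩

/-- Endpoints of an edge. -/
def ends : W.E → W.V × W.V
  | .inl ⟨j, i⟩ => (⟨j, i.castSucc⟩, ⟨j, i.succ⟩)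
  | .inr (.inl k) => (W.aV (W.leftAisle k), W.aV (W.rightAisle k))
  | .inr (.inr k) => (W.bV (W.leftAisle k), W.bV (W.rightAisle k))

/-- Length of an edge. -/
def elen : W.E → ℝ
  | .inl ⟨j, i⟩ => W.vlen j i
  | .inr (.inl k) => W.hlenA k
  | .inr (.inr k) => W.hlenB k

/-- A subgraph of `G` is a multiplicity function taking each edge with multiplicity at most 2. -/
def IsSub (T : W.E → ℕ) : Prop := ∀ e, T e ≤ 2

/-- Degree of a vertex in a subgraph, counting edges with multiplicity. -/
def deg (T : W.E → ℕ) (v : W.V) : ℕ :=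
  ∑ e : W.E, T e * ((if (W.ends e).1 = v then 1 else 0) + (if (W.ends e).2 = v then 1 else 0))

/-- Total length of a subgraph, counting edges with multiplicity. -/
def length (T : W.E → ℕ) : ℝ := ∑ e : W.E, (T e : ℝ) * W.elen e

/-- Source of a directed traversal step. -/
def stepSrc (s : W.E × Bool) : W.V := if s.2 then (W.ends s.1).1 else (W.ends s.1).2

/-- Destination of a directed traversal step. -/
def stepDst (s : W.E × Bool) : W.V := if s.2 then (W.ends s.1).2 else (W.ends s.1).1

/-- A list of directed steps is a closed walk. -/
def IsClosedWalk (l : List (W.E × Bool)) : Prop :=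
  l.Chain' (fun s t => W.stepDst s = W.stepSrc t) ∧
  ∀ s ∈ l.head?, ∀ t ∈ l.getLast?, W.stepDst t = W.stepSrc s

/-- `T` is a tour subgraph: every required vertex has positive degree and there is a
closed walk traversing every edge of `T`, counted with multiplicity, exactly once. -/
def IsTour (T : W.E → ℕ) : Prop :=
  W.IsSub T ∧ (∀ v, W.Required v → 0 < W.deg T v) ∧
  ∃ l : List (W.E × Bool), W.IsClosedWalk l ∧ ∀ e : W.E, (l.map Prod.fst).count e = T e

/-- `T` is an `L` partial tour subgraph: `T` is a subgraph supported on `L` and there is a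
subgraph `C` of `G − L` such that `T ∪ C` is a tour subgraph of `G`. -/
def IsPTS (L : Set W.E) (T : W.E → ℕ) : Prop :=
  W.IsSub T ∧ (∀ e ∉ L, T e = 0) ∧
  ∃ C : W.E → ℕ, W.IsSub C ∧ (∀ e ∈ L, C e = 0) ∧ W.IsTour (fun e => T e + C e)

/-- Two `L` PTSs are equivalent: any completion of one is a completion of the other. -/
def EquivPTS (L : Set W.E) (T₁ T₂ : W.E → ℕ) : Prop :=
  ∀ C : W.E → ℕ, W.IsSub C → (∀ e ∈ L, C e = 0) →
    (W.IsTour (fun e => T₁ e + C e) ↔ W.IsTour (fun e => T₂ e + C e))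

/-- The edge set containing the vertical edges of the (0-indexed) aisles `< vmax` and the
horizontal edges with (0-indexed) index `< hmax`.  Thus, in paper (1-indexed) notation,
`L_j = edgesUpTo j (j-1)`, `L_j^- = edgesUpTo (j-1) (j-1)` and `G = edgesUpTo n (n-1)`. -/
def edgesUpTo (vmax hmax : ℕ) : Set W.E := fun e =>
  match e with
  | .inl ⟨i, _⟩ => i.val < vmax
  | .inr (.inl k) => k.val < hmax
  | .inr (.inr k) => k.val < hmax

/-- The simple graph on the vertices of `G` induced by the edges of positive multiplicity. -/
def sgraph (T : W.E → ℕ) : SimpleGraph W.V where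
  Adj v w := v ≠ w ∧ ∃ e, 0 < T e ∧
    (((W.ends e).1 = v ∧ (W.ends e).2 = w) ∨ ((W.ends e).1 = w ∧ (W.ends e).2 = v))
  symm := by
    constructor
    intro v w hvw
    obtain ⟨hne, e, he, hor⟩ := hvw
    exact ⟨hne.symm, e, he, hor.symm⟩
  loopless := by constructor; intro v h; exact h.1 rfl

/-- Number of connected components of a subgraph after deleting all vertices of degree zero. -/
noncomputable def numComp (T : W.E → ℕ) : ℕ :=
  Nat.card ((W.sgraph T).induce {v : W.V | 0 < W.deg T v}).ConnectedComponent

/-- `v` and `w` both have positive degree but lie in different connected components of `T`. -/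
def SepComp (T : W.E → ℕ) (v w : W.V) : Prop :=
  0 < W.deg T v ∧ 0 < W.deg T w ∧ ¬ (W.sgraph T).Reachable v w

/-- The equivalence class of a subgraph relative to the cross-aisle vertices of aisle `j`:
the degree parities of `a_j` and `b_j` and the number of nonempty connected components. -/
noncomputable def classOf (T : W.E → ℕ) (j : Fin W.n) : DegClass × DegClass × ℕ :=
  (degClass (W.deg T (W.aV j)), degClass (W.deg T (W.bV j)), W.numComp T)

theorem exists_gapIdx (j : Fin W.n) :
    ∃ g : Fin (W.picks j + 1), ∀ i, W.vlen j i ≤ W.vlen j g := by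
  obtain ⟨g, -, hg⟩ :=
    Finset.exists_max_image (Finset.univ : Finset (Fin (W.picks j + 1))) (W.vlen j)
      ⟨0, Finset.mem_univ 0⟩
  exact ⟨g, fun i => hg i (Finset.mem_univ i)⟩

/-- The vertical edge of aisle `j` of maximum length: the edge omitted by the `gap`
configuration (which leaves the largest section of the aisle unconnected). -/
noncomputable def gapIdx (j : Fin W.n) : Fin (W.picks j + 1) := (W.exists_gapIdx j).choose

theorem gapIdx_spec (j : Fin W.n) : ∀ i, W.vlen j i ≤ W.vlen j (W.gapIdx j) :=
  (W.exists_gapIdx j).choose_spec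

/-- The multiplicity of the `i`-th vertical edge of aisle `j` in each of the six vertical
edge configurations. -/
noncomputable def vconfFun (j : Fin W.n) (c : VCName) (i : Fin (W.picks j + 1)) : ℕ :=
  match c with
  | .onepass => 1
  | .top => if i.val < W.picks j then 2 else 0
  | .bottom => if 1 ≤ i.val then 2 else 0
  | .gap => if i = W.gapIdx j then 0 else 2
  | .twopass => 2
  | .none => 0

/-- A vertical edge configuration in aisle `j`, as a subgraph of `G`. -/
noncomputable def vcSub (j : Fin W.n) (c : VCName) : W.E → ℕ := fun e =>
  match e with
  | .inl ⟨i, x⟩ =>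
      if h : i = j then W.vconfFun j c ⟨x.val, by exact h ▸ x.isLt⟩ else 0
  | .inr _ => 0

/-- A horizontal edge configuration between aisles `k` and `k+1`, as a subgraph of `G`. -/
def hcSub (k : Fin (W.n - 1)) (c : HCName) : W.E → ℕ := fun e =>
  match e with
  | .inl _ => 0
  | .inr (.inl k') => if k' = k then hcA c else 0
  | .inr (.inr k') => if k' = k then hcB c else 0

end Warehouse
section ListLemmas

variable {α β σ M : Type*}

lemma sum_map_eq_sum_count [DecidableEq α] [Fintype α] [AddCommMonoid M]
    (L : List α) (G : α → M) : (L.map G).sum = ∑ e, (L.count e) • G e := by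
  induction L with
  | nil => simp
  | cons a L ih =>
      simp only [List.map_cons, List.sum_cons, ih, List.count_cons]
      have key : ∀ e : α, ((L.count e) + if a == e then 1 else 0) • G e
          = (L.count e) • G e + (if e = a then G e else 0) := by
        intro e
        rcases eq_or_ne a e with h | h
        · subst h; simp [add_smul]
        · simp [h, Ne.symm h]
      rw [Finset.sum_congr rfl (fun e _ => key e), Finset.sum_add_distrib,
        Finset.sum_ite_eq' Finset.univ a G]
      simp [add_comm]

lemma sum_map_ite_eq_count [DecidableEq α] (L : List α) (v : α) :
    (L.map fun x => if x = v then 1 else 0).sum = L.count v := by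
  induction L with
  | nil => simp
  | cons a L ih =>
      simp only [List.map_cons, List.sum_cons, ih, List.count_cons]
      by_cases h : a = v <;> simp [h, add_comm]

variable (f g : σ → β)

lemma chain_map_f_eq (l : List σ) (hl : l.Chain' (fun s t => f s = g t)) :
    l.map f = l.tail.map g ++ (l.getLast?.map f).toList := by
  induction l with
  | nil => simp
  | cons a t ih =>
      cases t with
      | nil => simp
      | cons b t' =>
          have h1 : f a = g b := (List.isChain_cons_cons.mp hl).1
          have h2 := ih (List.isChain_cons_cons.mp hl).2
          show f a :: List.map f (b :: t') = _
          rw [h2, h1]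
          simp [List.getLast?_cons_cons]

lemma chain_count_eq [DecidableEq β] (l : List σ)
    (h : l.Chain' (fun s t => f s = g t))
    (hc : ∀ s ∈ l.head?, ∀ t ∈ l.getLast?, f t = g s) (v : β) :
    (l.map g).count v = (l.map f).count v := by
  cases l with
  | nil => simp
  | cons a t =>
      have hlast : ∃ b, (a :: t).getLast? = some b :=
        ⟨(a :: t).getLast (by simp), List.getLast?_eq_getLast (by simp)⟩
      obtain ⟨b, hb⟩ := hlast
      have hfb : f b = g a := hc a rfl b hb
      rw [chain_map_f_eq f g _ h, hb]
      simp only [List.tail_cons, Option.map_some, Option.toList_some, List.count_append,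
        List.map_cons, List.count_cons, List.count_nil, List.count_singleton', hfb]
      by_cases hv : g a = v <;> simp [hv, add_comm]

lemma chain_telescope [AddCommGroup M] (φ : β → M) (l : List σ)
    (h : l.Chain' (fun s t => f s = g t)) :
    ∀ a ∈ l.head?, ∀ b ∈ l.getLast?,
      (l.map fun s => φ (f s) - φ (g s)).sum = φ (f b) - φ (g a) := by
  induction l with
  | nil => simp
  | cons x t ih =>
      intro a ha b hb
      have hxa : x = a := by simpa using ha
      subst hxa
      cases t with
      | nil =>
          simp only [List.getLast?_singleton, Option.mem_def, Option.some_inj] at hb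
          subst hb
          simp
      | cons y t' =>
          have h1 : f x = g y := (List.isChain_cons_cons.mp h).1
          have h2 := ih (List.isChain_cons_cons.mp h).2 y rfl b (by
            rw [List.getLast?_cons_cons] at hb; exact hb)
          simp only [List.map_cons, List.sum_cons] at h2 ⊢
          rw [show φ (f y) - φ (g y) + (List.map (fun s => φ (f s) - φ (g s)) t').sum
            = φ (f b) - φ (g y) from h2, h1]
          abel

lemma chain_invariant (Q : β → Prop) (l : List σ)
    (h : l.Chain' (fun s t => f s = g t))
    (hstep : ∀ s ∈ l, (Q (g s) ↔ Q (f s))) :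
    ∀ a ∈ l.head?, ∀ s ∈ l, (Q (g a) ↔ Q (g s)) := by
  induction l with
  | nil => simp
  | cons x t ih =>
      intro a ha s hs
      have hxa : x = a := by simpa using ha
      subst hxa
      rcases List.mem_cons.mp hs with hs | hs
      · rw [hs]
      · cases t with
        | nil => simp at hs
        | cons y t' =>
            have h1 : f x = g y := (List.isChain_cons_cons.mp h).1
            have h2 := ih (List.isChain_cons_cons.mp h).2
              (fun s hs => hstep s (List.mem_cons_of_mem _ hs)) y rfl s hs
            calc Q (g x) ↔ Q (f x) := hstep x (by simp)
              _ ↔ Q (g y) := by rw [h1]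
              _ ↔ Q (g s) := h2

end ListLemmas
namespace Warehouse

variable {W : Warehouse}

lemma V_mk_eq_iff {j j' : Fin W.n} {x : Fin (W.picks j + 2)} {y : Fin (W.picks j' + 2)} :
    (⟨j, x⟩ : W.V) = ⟨j', y⟩ ↔ j = j' ∧ x.val = y.val := by
  constructor
  · intro h
    obtain ⟨h1, h2⟩ := Sigma.mk.inj_iff.mp h
    subst h1
    exact ⟨rfl, congrArg Fin.val (eq_of_heq h2)⟩
  · rintro ⟨rfl, h⟩
    exact congrArg _ (Fin.ext h)

lemma E_vert_eq_iff {j j' : Fin W.n} {i : Fin (W.picks j + 1)} {i' : Fin (W.picks j' + 1)} :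
    (Sum.inl ⟨j, i⟩ : W.E) = Sum.inl ⟨j', i'⟩ ↔ j = j' ∧ i.val = i'.val := by
  constructor
  · intro h
    obtain ⟨h1, h2⟩ := Sigma.mk.inj_iff.mp (Sum.inl.inj h)
    subst h1
    exact ⟨rfl, congrArg Fin.val (eq_of_heq h2)⟩
  · rintro ⟨rfl, h⟩
    exact congrArg _ (congrArg _ (Fin.ext h))

lemma step_ind (s : W.E × Bool) (v : W.V) :
    ((if W.stepSrc s = v then 1 else 0) + (if W.stepDst s = v then 1 else 0) : ℕ)
      = (if (W.ends s.1).1 = v then 1 else 0) + (if (W.ends s.1).2 = v then 1 else 0) := by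
  rcases s with ⟨e, b⟩
  cases b <;> simp [stepSrc, stepDst] <;> ring

lemma deg_eq_count (T : W.E → ℕ) (l : List (W.E × Bool))
    (hcnt : ∀ e, (l.map Prod.fst).count e = T e) (v : W.V) :
    W.deg T v = (l.map W.stepSrc).count v + (l.map W.stepDst).count v := by
  have h1 : W.deg T v = ((l.map Prod.fst).map
      (fun e => (if (W.ends e).1 = v then 1 else 0) + (if (W.ends e).2 = v then 1 else 0))).sum := by
    rw [sum_map_eq_sum_count]
    unfold deg
    refine Finset.sum_congr rfl fun e _ => ?_
    rw [hcnt e, smul_eq_mul]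
  rw [h1, List.map_map]
  have h2 : ((l.map (fun s : W.E × Bool =>
      (if (W.ends s.1).1 = v then 1 else 0) + (if (W.ends s.1).2 = v then 1 else 0))).sum : ℕ)
      = (l.map fun s => (if W.stepSrc s = v then 1 else 0) + (if W.stepDst s = v then 1 else 0)).sum := by
    refine congrArg _ (List.map_congr_left fun s _ => ?_)
    rw [step_ind]
  rw [show ((fun e => (if (W.ends e).1 = v then 1 else 0) + (if (W.ends e).2 = v then 1 else 0))
      ∘ Prod.fst : W.E × Bool → ℕ) = fun s : W.E × Bool =>
      (if (W.ends s.1).1 = v then 1 else 0) + (if (W.ends s.1).2 = v then 1 else 0) from rfl, h2]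
  have h3 : (l.map fun s => (if W.stepSrc s = v then 1 else 0) + (if W.stepDst s = v then 1 else 0)).sum
      = (l.map fun s => if W.stepSrc s = v then 1 else 0).sum
        + (l.map fun s => if W.stepDst s = v then 1 else 0).sum := by
    induction l with
    | nil => simp
    | cons a t ih => simp [ih]; ring
  rw [h3, ← sum_map_ite_eq_count (l.map W.stepSrc) v, ← sum_map_ite_eq_count (l.map W.stepDst) v,
    List.map_map, List.map_map]
  rfl

lemma count_src_eq_count_dst (l : List (W.E × Bool)) (hw : W.IsClosedWalk l) (v : W.V) :
    (l.map W.stepSrc).count v = (l.map W.stepDst).count v :=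
  chain_count_eq W.stepDst W.stepSrc l hw.1 hw.2 v

lemma deg_eq_twice (T : W.E → ℕ) (l : List (W.E × Bool)) (hw : W.IsClosedWalk l)
    (hcnt : ∀ e, (l.map Prod.fst).count e = T e) (v : W.V) :
    W.deg T v = 2 * (l.map W.stepSrc).count v := by
  rw [deg_eq_count T l hcnt v, ← count_src_eq_count_dst l hw v]
  ring

lemma exists_incident_of_deg_pos {T : W.E → ℕ} {v : W.V} (h : 0 < W.deg T v) :
    ∃ e, 0 < T e ∧ ((W.ends e).1 = v ∨ (W.ends e).2 = v) := by
  by_contra hc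
  push_neg at hc
  have : W.deg T v = 0 := by
    unfold deg
    refine Finset.sum_eq_zero fun e _ => ?_
    rcases Nat.eq_zero_or_pos (T e) with h0 | h0
    · simp [h0]
    · have h1 := hc e h0
      simp [h1.1, h1.2]
  omega

lemma deg_pos_of_incident {T : W.E → ℕ} {v : W.V} {e : W.E} (hTe : 0 < T e)
    (h : (W.ends e).1 = v ∨ (W.ends e).2 = v) : 0 < W.deg T v := by
  have hterm : 0 < T e * ((if (W.ends e).1 = v then 1 else 0) + (if (W.ends e).2 = v then 1 else 0)) := by
    rcases h with h | h <;> simp [h] <;> omega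
  have hle := Finset.single_le_sum (f := fun e => T e *
      ((if (W.ends e).1 = v then 1 else 0) + (if (W.ends e).2 = v then 1 else 0)))
    (fun e _ => Nat.zero_le _) (Finset.mem_univ e)
  unfold deg
  omega

lemma ends_cases (e : W.E) {j : Fin W.n} {x : Fin (W.picks j + 2)}
    (h : (W.ends e).1 = (⟨j, x⟩ : W.V) ∨ (W.ends e).2 = (⟨j, x⟩ : W.V)) :
    (∃ i : Fin (W.picks j + 1), e = Sum.inl ⟨j, i⟩ ∧ (i.val = x.val ∨ i.val + 1 = x.val)) ∨
      (x.val = 0 ∨ x.val = W.picks j + 1) := by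
  rcases e with ⟨j', i⟩ | (k | k)
  · rcases h with h | h
    · obtain ⟨rfl, h2⟩ := V_mk_eq_iff.mp h
      exact Or.inl ⟨i, rfl, Or.inl h2⟩
    · obtain ⟨rfl, h2⟩ := V_mk_eq_iff.mp h
      exact Or.inl ⟨i, rfl, Or.inr h2⟩
  · rcases h with h | h <;>
    · obtain ⟨rfl, h2⟩ := V_mk_eq_iff.mp h
      exact Or.inr (Or.inl h2.symm)
  · rcases h with h | h <;>
    · obtain ⟨rfl, h2⟩ := V_mk_eq_iff.mp h
      refine Or.inr (Or.inr ?_)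
      simp [Fin.last] at h2
      omega

lemma deg_interior (T : W.E → ℕ) (j : Fin W.n) (p : ℕ) (h1 : 0 < p) (h2 : p < W.picks j + 1) :
    W.deg T ⟨j, ⟨p, by omega⟩⟩
      = T (Sum.inl ⟨j, ⟨p - 1, by omega⟩⟩) + T (Sum.inl ⟨j, ⟨p, by omega⟩⟩) := by
  set v : W.V := ⟨j, ⟨p, by omega⟩⟩ with hv
  set e1 : W.E := Sum.inl ⟨j, ⟨p - 1, by omega⟩⟩ with he1
  set e2 : W.E := Sum.inl ⟨j, ⟨p, by omega⟩⟩ with he2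
  have hne : e1 ≠ e2 := by
    rw [he1, he2]
    intro h
    have := (E_vert_eq_iff.mp h).2
    simp at this
    omega
  have hvanish : ∀ e ∈ Finset.univ, e ∉ ({e1, e2} : Finset W.E) →
      T e * ((if (W.ends e).1 = v then 1 else 0) + (if (W.ends e).2 = v then 1 else 0)) = 0 := by
    intro e _ hmem
    simp only [Finset.mem_insert, Finset.mem_singleton] at hmem
    push_neg at hmem
    have hno : ¬ ((W.ends e).1 = v ∨ (W.ends e).2 = v) := by
      intro h
      rcases ends_cases e h with ⟨i, rfl, hi⟩ | hx
      · rcases hi with hi | hi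
        · exact hmem.2 (E_vert_eq_iff.mpr ⟨rfl, show (i : ℕ) = p from hi⟩)
        · have hi' : (i : ℕ) + 1 = p := hi
          exact hmem.1 (E_vert_eq_iff.mpr ⟨rfl, show (i : ℕ) = p - 1 by omega⟩)
      · have hx' : p = 0 ∨ p = W.picks j + 1 := hx
        omega
    push_neg at hno
    simp [hno.1, hno.2]
  have hsum : W.deg T v = ∑ e ∈ ({e1, e2} : Finset W.E),
      T e * ((if (W.ends e).1 = v then 1 else 0) + (if (W.ends e).2 = v then 1 else 0)) :=
    (Finset.sum_subset (Finset.subset_univ _) hvanish).symm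
  rw [hsum, Finset.sum_pair hne]
  have hends1 : W.ends e1 = (⟨j, ⟨p - 1, by omega⟩⟩, ⟨j, ⟨p, by omega⟩⟩) := by
    rw [he1]
    refine Prod.ext (V_mk_eq_iff.mpr ⟨rfl, rfl⟩) (V_mk_eq_iff.mpr ⟨rfl, show p - 1 + 1 = p by omega⟩)
  have hends2 : W.ends e2 = (⟨j, ⟨p, by omega⟩⟩, ⟨j, ⟨p + 1, by omega⟩⟩) := by
    rw [he2]
    refine Prod.ext (V_mk_eq_iff.mpr ⟨rfl, rfl⟩) (V_mk_eq_iff.mpr ⟨rfl, rfl⟩)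
  rw [hends1, hends2]
  have c1 : ((⟨j, ⟨p - 1, by omega⟩⟩ : W.V) = v) = False := by
    apply eq_false
    intro h
    have h' : p - 1 = p := (V_mk_eq_iff.mp h).2
    omega
  have c2 : ((⟨j, ⟨p, by omega⟩⟩ : W.V) = v) = True := eq_true rfl
  have c3 : ((⟨j, ⟨p + 1, by omega⟩⟩ : W.V) = v) = False := by
    apply eq_false
    intro h
    have h' : p + 1 = p := (V_mk_eq_iff.mp h).2
    omega
  show T e1 * ((if (⟨j, ⟨p - 1, by omega⟩⟩ : W.V) = v then 1 else 0) + (if (⟨j, ⟨p, by omega⟩⟩ : W.V) = v then 1 else 0)) + T e2 * ((if (⟨j, ⟨p, by omega⟩⟩ : W.V) = v then 1 else 0) + (if (⟨j, ⟨p + 1, by omega⟩⟩ : W.V) = v then 1 else 0)) = T e1 + T e2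
  simp only [c1, c2, c3, if_true, if_false]
  ring

end Warehouse
namespace Warehouse

variable {W : Warehouse}

lemma step_edge_pos {T : W.E → ℕ} {l : List (W.E × Bool)}
    (hcnt : ∀ e, (l.map Prod.fst).count e = T e) {s : W.E × Bool} (hs : s ∈ l) : 0 < T s.1 := by
  rw [← hcnt s.1]
  exact List.count_pos_iff.mpr (List.mem_map_of_mem (f := Prod.fst) hs)

lemma exists_step_of_pos {T : W.E → ℕ} {l : List (W.E × Bool)}
    (hcnt : ∀ e, (l.map Prod.fst).count e = T e) {e : W.E} (he : 0 < T e) :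
    ∃ s ∈ l, s.1 = e := by
  rw [← hcnt e] at he
  obtain ⟨s, hs, hse⟩ := List.mem_map.mp (List.count_pos_iff.mp he)
  exact ⟨s, hs, hse⟩

lemma walk_S_invariant {T : W.E → ℕ} {l : List (W.E × Bool)}
    (hw : W.IsClosedWalk l) (hcnt : ∀ e, (l.map Prod.fst).count e = T e)
    (S : Set W.V)
    (hclose : ∀ e, 0 < T e → ((W.ends e).1 ∈ S ↔ (W.ends e).2 ∈ S))
    {v w : W.V} (hv : 0 < W.deg T v) (hw' : 0 < W.deg T w)
    (hvS : v ∈ S) (hwS : w ∉ S) : False := by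
  obtain ⟨ev, hev, hevi⟩ := exists_incident_of_deg_pos hv
  obtain ⟨ew, hew, hewi⟩ := exists_incident_of_deg_pos hw'
  obtain ⟨sv, hsv, hsve⟩ := exists_step_of_pos hcnt hev
  obtain ⟨sw, hsw, hswe⟩ := exists_step_of_pos hcnt hew
  -- both endpoints of a positive edge have the same S-membership
  have hboth : ∀ e, 0 < T e → (((W.ends e).1 ∈ S ∧ (W.ends e).2 ∈ S) ∨
      ((W.ends e).1 ∉ S ∧ (W.ends e).2 ∉ S)) := by
    intro e he
    have := hclose e he
    tauto
  have hsrc_mem : ∀ s : W.E × Bool, 0 < T s.1 →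
      ((W.stepSrc s ∈ S ↔ (W.ends s.1).1 ∈ S) ∧ (W.stepSrc s ∈ S ↔ W.stepDst s ∈ S)) := by
    intro s hTs
    have hc := hclose s.1 hTs
    rcases s with ⟨e, b⟩
    cases b
    · refine ⟨?_, ?_⟩
      · show (W.ends e).2 ∈ S ↔ (W.ends e).1 ∈ S
        exact hc.symm
      · show (W.ends e).2 ∈ S ↔ (W.ends e).1 ∈ S
        exact hc.symm
    · refine ⟨?_, ?_⟩
      · show (W.ends e).1 ∈ S ↔ (W.ends e).1 ∈ S
        exact Iff.rfl
      · show (W.ends e).1 ∈ S ↔ (W.ends e).2 ∈ S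
        exact hc
  have hstep : ∀ s ∈ l, ((W.stepSrc s ∈ S) ↔ (W.stepDst s ∈ S)) :=
    fun s hs => (hsrc_mem s (step_edge_pos hcnt hs)).2
  have hnil : l ≠ [] := by
    intro h
    rw [h] at hsv
    exact absurd hsv List.not_mem_nil
  obtain ⟨a, ha⟩ : ∃ a, l.head? = some a := ⟨l.head hnil, List.head?_eq_head hnil⟩
  have hinv := chain_invariant W.stepDst W.stepSrc (· ∈ S) l hw.1 hstep a ha
  have hsvS : W.stepSrc sv ∈ S := by
    have h1 := (hsrc_mem sv (step_edge_pos hcnt hsv)).1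
    have h3 := hclose sv.1 (step_edge_pos hcnt hsv)
    rw [hsve] at h1 h3
    rcases hevi with h | h
    · rw [h] at h1
      exact h1.mpr hvS
    · rw [h] at h3
      exact h1.mpr (h3.mpr hvS)
  have hswS : W.stepSrc sw ∉ S := by
    have h1 := (hsrc_mem sw (step_edge_pos hcnt hsw)).1
    have h3 := hclose sw.1 (step_edge_pos hcnt hsw)
    rw [hswe] at h1 h3
    rcases hewi with h | h
    · rw [h] at h1
      exact fun hc => hwS (h1.mp hc)
    · rw [h] at h3
      exact fun hc => hwS (h3.mp (h1.mp hc))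
  have e1 := hinv sv hsv
  have e2 := hinv sw hsw
  tauto

lemma horiz_parity {T : W.E → ℕ} (ht : W.IsTour T) (k : Fin (W.n - 1)) :
    (T (Sum.inr (Sum.inl k)) + T (Sum.inr (Sum.inr k))) % 2 = 0 := by
  obtain ⟨hsub, hreq, l, hw, hcnt⟩ := ht
  set ψ : Fin W.n → ZMod 2 := fun j => if j.val ≤ k.val then 1 else 0 with hψdef
  set φ : W.V → ZMod 2 := fun v => ψ v.1 with hφ
  have hψk : ∀ x : Fin (W.n - 1), ψ (W.leftAisle x) + ψ (W.rightAisle x)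
      = if x = k then 1 else 0 := by
    intro x
    have hL : ψ (W.leftAisle x) = if x.val ≤ k.val then 1 else 0 := rfl
    have hR : ψ (W.rightAisle x) = if x.val + 1 ≤ k.val then 1 else 0 := rfl
    rw [hL, hR]
    rcases eq_or_ne x k with rfl | hxk
    · rw [if_pos (le_refl _), if_neg (by omega), if_pos rfl]
      exact add_zero 1
    · have hxkv : x.val ≠ k.val := fun h => hxk (Fin.ext h)
      rw [if_neg hxk]
      rcases Nat.lt_or_ge x.val k.val with h | h
      · rw [if_pos (by omega), if_pos (by omega)]
        exact CharTwo.add_self_eq_zero 1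
      · rw [if_neg (by omega), if_neg (by omega)]
        exact CharTwo.add_self_eq_zero 0
  have htel : (l.map fun s => φ (W.stepDst s) - φ (W.stepSrc s)).sum = 0 := by
    cases l with
    | nil => simp
    | cons a t =>
        obtain ⟨b, hb⟩ : ∃ b, (a :: t).getLast? = some b :=
          ⟨(a :: t).getLast (by simp), List.getLast?_eq_getLast (by simp)⟩
        rw [chain_telescope W.stepDst W.stepSrc φ (a :: t) hw.1 a rfl b hb,
          hw.2 a rfl b hb, sub_self]
  have key2 : ∀ x y : ZMod 2, x - y = x + y := fun x y => by
    rw [sub_eq_add_neg, CharTwo.neg_eq]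
  have hsum : (l.map fun s => φ (W.stepDst s) - φ (W.stepSrc s)).sum
      = ∑ e : W.E, (T e) • (φ (W.ends e).1 + φ (W.ends e).2) := by
    have h1 : (l.map fun s => φ (W.stepDst s) - φ (W.stepSrc s)).sum
        = ((l.map Prod.fst).map fun e => φ (W.ends e).1 + φ (W.ends e).2).sum := by
      rw [List.map_map]
      refine congrArg _ (List.map_congr_left fun s _ => ?_)
      rcases s with ⟨e, b⟩
      cases b
      · show φ (W.ends e).1 - φ (W.ends e).2 = φ (W.ends e).1 + φ (W.ends e).2
        exact key2 _ _
      · show φ (W.ends e).2 - φ (W.ends e).1 = φ (W.ends e).1 + φ (W.ends e).2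
        rw [key2, add_comm]
    rw [h1, sum_map_eq_sum_count]
    exact Finset.sum_congr rfl fun e _ => by rw [hcnt e]
  have hval : ∑ e : W.E, (T e) • (φ (W.ends e).1 + φ (W.ends e).2)
      = ((T (Sum.inr (Sum.inl k)) : ZMod 2) + (T (Sum.inr (Sum.inr k)) : ZMod 2)) := by
    have hts : ∑ e : W.E, (T e) • (φ (W.ends e).1 + φ (W.ends e).2)
        = ∑ e : (Σ j : Fin W.n, Fin (W.picks j + 1)) ⊕ (Fin (W.n - 1) ⊕ Fin (W.n - 1)),
            (T e) • (φ (W.ends e).1 + φ (W.ends e).2) := rfl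
    rw [hts, Fintype.sum_sum_type, Fintype.sum_sum_type]
    have hvert : ∑ x : (Σ j : Fin W.n, Fin (W.picks j + 1)),
        (T (Sum.inl x)) • (φ (W.ends (Sum.inl x)).1 + φ (W.ends (Sum.inl x)).2) = 0 := by
      refine Finset.sum_eq_zero fun x _ => ?_
      rcases x with ⟨j, i⟩
      have hz : φ (W.ends (Sum.inl ⟨j, i⟩)).1 + φ (W.ends (Sum.inl ⟨j, i⟩)).2 = 0 := by
        show ψ j + ψ j = 0
        exact CharTwo.add_self_eq_zero _
      rw [hz, smul_zero]
    have hA : ∑ x : Fin (W.n - 1),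
        (T (Sum.inr (Sum.inl x))) • (φ (W.ends (Sum.inr (Sum.inl x))).1 + φ (W.ends (Sum.inr (Sum.inl x))).2)
        = (T (Sum.inr (Sum.inl k)) : ZMod 2) := by
      have hterm : ∀ x, φ (W.ends (Sum.inr (Sum.inl x))).1 + φ (W.ends (Sum.inr (Sum.inl x))).2
          = if x = k then 1 else 0 := fun x => hψk x
      rw [Finset.sum_congr rfl fun x _ => by rw [hterm x]]
      rw [Finset.sum_congr rfl (fun x _ => by
        rw [smul_ite, smul_zero, nsmul_eq_mul, mul_one]), Finset.sum_ite_eq' Finset.univ k]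
      simp
    have hB : ∑ x : Fin (W.n - 1),
        (T (Sum.inr (Sum.inr x))) • (φ (W.ends (Sum.inr (Sum.inr x))).1 + φ (W.ends (Sum.inr (Sum.inr x))).2)
        = (T (Sum.inr (Sum.inr k)) : ZMod 2) := by
      have hterm : ∀ x, φ (W.ends (Sum.inr (Sum.inr x))).1 + φ (W.ends (Sum.inr (Sum.inr x))).2
          = if x = k then 1 else 0 := fun x => hψk x
      rw [Finset.sum_congr rfl fun x _ => by rw [hterm x]]
      rw [Finset.sum_congr rfl (fun x _ => by
        rw [smul_ite, smul_zero, nsmul_eq_mul, mul_one]), Finset.sum_ite_eq' Finset.univ k]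
      simp
    rw [hvert, hA, hB, zero_add]
  have hzero : ((T (Sum.inr (Sum.inl k)) + T (Sum.inr (Sum.inr k)) : ℕ) : ZMod 2) = 0 := by
    push_cast
    rw [← hval, ← hsum, htel]
  have := (ZMod.natCast_eq_zero_iff _ 2).mp hzero
  omega

end Warehouse
namespace Warehouse

variable {W : Warehouse}

lemma aV_not_mem {S : Set W.V} {j : Fin W.n} {g1 g2 : ℕ}
    (hS : S = {v : W.V | v.1 = j ∧ g1 < v.2.val ∧ v.2.val ≤ g2}) (hg1 : 0 < g1 + 1) :
    ∀ j'' : Fin W.n, W.aV j'' ∉ S := by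
  intro j'' hm
  rw [hS] at hm
  exact absurd hm.2.1 (Nat.not_lt_zero g1)

lemma depot_not_in_strip {S : Set W.V} {j : Fin W.n} {g1 g2 : ℕ}
    (hS : S = {v : W.V | v.1 = j ∧ g1 < v.2.val ∧ v.2.val ≤ g2})
    (hg2 : g2 < W.picks j + 1) : W.depot ∉ S := by
  have haV : ∀ j'' : Fin W.n, W.aV j'' ∉ S := by
    intro j'' hm
    rw [hS] at hm
    exact absurd hm.2.1 (Nat.not_lt_zero g1)
  have hbV : ∀ j'' : Fin W.n, W.bV j'' ∉ S := by
    intro j'' hm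
    rw [hS] at hm
    obtain ⟨h1, _, h3⟩ := hm
    have h1' : j'' = j := h1
    subst h1'
    have h3' : W.picks j'' + 1 ≤ g2 := h3
    omega
  unfold depot
  split
  · exact haV _
  · exact hbV _

/-- In any tour, an aisle cannot have two distinct vertical edges of multiplicity zero. -/
lemma aisle_zero_unique {T : W.E → ℕ} (ht : W.IsTour T) (j : Fin W.n) (g1 g2 : ℕ)
    (h12 : g1 < g2) (hg2 : g2 < W.picks j + 1)
    (hz1 : T (Sum.inl ⟨j, ⟨g1, by omega⟩⟩) = 0) (hz2 : T (Sum.inl ⟨j, ⟨g2, by omega⟩⟩) = 0) :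
    False := by
  obtain ⟨hsub, hreq, l, hw, hcnt⟩ := ht
  set S : Set W.V := {v : W.V | v.1 = j ∧ g1 < v.2.val ∧ v.2.val ≤ g2} with hS
  have hclose : ∀ e, 0 < T e → (((W.ends e).1 ∈ S) ↔ ((W.ends e).2 ∈ S)) := by
    intro e he
    rcases e with ⟨j', i⟩ | (k | k)
    · by_cases hjj : j' = j
      · subst hjj
        have hne1 : i.val ≠ g1 := by
          intro h
          have hEe : (Sum.inl ⟨j', i⟩ : W.E)
              = Sum.inl ⟨j', (⟨g1, by omega⟩ : Fin (W.picks j' + 1))⟩ :=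
            E_vert_eq_iff.mpr ⟨rfl, h⟩
          have h0 : T (Sum.inl ⟨j', i⟩) = 0 := by rw [hEe]; exact hz1
          omega
        have hne2 : i.val ≠ g2 := by
          intro h
          have hEe : (Sum.inl ⟨j', i⟩ : W.E)
              = Sum.inl ⟨j', (⟨g2, by omega⟩ : Fin (W.picks j' + 1))⟩ :=
            E_vert_eq_iff.mpr ⟨rfl, h⟩
          have h0 : T (Sum.inl ⟨j', i⟩) = 0 := by rw [hEe]; exact hz2
          omega
        have m1 : ((⟨j', i.castSucc⟩ : W.V) ∈ S) ↔ (j' = j' ∧ g1 < i.val ∧ i.val ≤ g2) := by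
          rw [show ((⟨j', i.castSucc⟩ : W.V) ∈ S) ↔
            (j' = j' ∧ g1 < (i.castSucc).val ∧ (i.castSucc).val ≤ g2) from Iff.rfl,
            Fin.coe_castSucc]
        have m2 : ((⟨j', i.succ⟩ : W.V) ∈ S) ↔ (j' = j' ∧ g1 < i.val + 1 ∧ i.val + 1 ≤ g2) := by
          rw [show ((⟨j', i.succ⟩ : W.V) ∈ S) ↔
            (j' = j' ∧ g1 < (i.succ).val ∧ (i.succ).val ≤ g2) from Iff.rfl,
            Fin.val_succ]
        show ((⟨j', i.castSucc⟩ : W.V) ∈ S) ↔ ((⟨j', i.succ⟩ : W.V) ∈ S)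
        rw [m1, m2]
        constructor <;> rintro ⟨-, h⟩ <;> exact ⟨rfl, by omega⟩
      · have m1 : ((⟨j', i.castSucc⟩ : W.V) ∉ S) := fun hm => hjj hm.1
        have m2 : ((⟨j', i.succ⟩ : W.V) ∉ S) := fun hm => hjj hm.1
        exact iff_of_false m1 m2
    · exact iff_of_false (aV_not_mem hS (by omega) _) (aV_not_mem hS (by omega) _)
    · have hbV : ∀ j'' : Fin W.n, W.bV j'' ∉ S := by
        intro j'' hm
        obtain ⟨h1, _, h3⟩ := hm
        have h1' : j'' = j := h1
        subst h1'
        have h3' : W.picks j'' + 1 ≤ g2 := h3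
        omega
      exact iff_of_false (hbV _) (hbV _)
  have hpick : W.Required ⟨j, ⟨g1 + 1, by omega⟩⟩ :=
    Or.inl ⟨Nat.succ_pos g1, by show g1 + 1 < W.picks j + 1; omega⟩
  have hdep : W.Required W.depot := Or.inr rfl
  exact walk_S_invariant hw hcnt S hclose (hreq _ hpick) (hreq _ hdep)
    (show (⟨j, ⟨g1 + 1, by omega⟩⟩ : W.V) ∈ S from
      ⟨rfl, show g1 < g1 + 1 from Nat.lt_succ_self g1, show g1 + 1 ≤ g2 by omega⟩)
    (depot_not_in_strip hS hg2)

/-- If the gap of an aisle is interior, the top cross vertex has a positive horizontal edge. -/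
lemma exists_outside_a {T : W.E → ℕ} (ht : W.IsTour T) (j : Fin W.n) (g : ℕ)
    (hg1 : 0 < g) (hg2 : g < W.picks j)
    (hz : T (Sum.inl ⟨j, ⟨g, by omega⟩⟩) = 0) :
    ∃ e, 0 < T e ∧ ((W.ends e).1 = W.aV j ∨ (W.ends e).2 = W.aV j) ∧
      ∃ k', e = Sum.inr k' := by
  obtain ⟨hsub, hreq, l, hw, hcnt⟩ := ht
  by_contra hcon
  set S : Set W.V := {v : W.V | v.1 = j ∧ v.2.val ≤ g} with hS
  have hclose : ∀ e, 0 < T e → (((W.ends e).1 ∈ S) ↔ ((W.ends e).2 ∈ S)) := by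
    intro e he
    rcases e with ⟨j', i⟩ | (k | k)
    · by_cases hjj : j' = j
      · subst hjj
        have hne : i.val ≠ g := by
          intro h
          have hEe : (Sum.inl ⟨j', i⟩ : W.E)
              = Sum.inl ⟨j', (⟨g, by omega⟩ : Fin (W.picks j' + 1))⟩ :=
            E_vert_eq_iff.mpr ⟨rfl, h⟩
          have h0 : T (Sum.inl ⟨j', i⟩) = 0 := by rw [hEe]; exact hz
          omega
        have m1 : ((⟨j', i.castSucc⟩ : W.V) ∈ S) ↔ (j' = j' ∧ i.val ≤ g) := by
          rw [show ((⟨j', i.castSucc⟩ : W.V) ∈ S) ↔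
            (j' = j' ∧ (i.castSucc).val ≤ g) from Iff.rfl, Fin.coe_castSucc]
        have m2 : ((⟨j', i.succ⟩ : W.V) ∈ S) ↔ (j' = j' ∧ i.val + 1 ≤ g) := by
          rw [show ((⟨j', i.succ⟩ : W.V) ∈ S) ↔
            (j' = j' ∧ (i.succ).val ≤ g) from Iff.rfl, Fin.val_succ]
        show ((⟨j', i.castSucc⟩ : W.V) ∈ S) ↔ ((⟨j', i.succ⟩ : W.V) ∈ S)
        rw [m1, m2]
        constructor <;> rintro ⟨-, h⟩ <;> exact ⟨rfl, by omega⟩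
      · exact iff_of_false (fun hm => hjj hm.1) (fun hm => hjj hm.1)
    · -- horizontal back edge
      by_cases hj : W.leftAisle k = j ∨ W.rightAisle k = j
      · exfalso
        rcases hj with hj | hj
        · exact hcon ⟨_, he, Or.inl (by show W.aV (W.leftAisle k) = _; rw [hj]),
            Sum.inl k, rfl⟩
        · exact hcon ⟨_, he, Or.inr (by show W.aV (W.rightAisle k) = _; rw [hj]),
            Sum.inl k, rfl⟩
      · push_neg at hj
        have m1 : W.aV (W.leftAisle k) ∉ S := fun hm => hj.1 (by exact hm.1)
        have m2 : W.aV (W.rightAisle k) ∉ S := fun hm => hj.2 (by exact hm.1)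
        exact iff_of_false m1 m2
    · have hbV : ∀ j'' : Fin W.n, W.bV j'' ∉ S := by
        intro j'' hm
        obtain ⟨h1, h2⟩ := hm
        have h1' : j'' = j := h1
        subst h1'
        have h2' : W.picks j'' + 1 ≤ g := h2
        omega
      exact iff_of_false (hbV _) (hbV _)
  have hpick1 : W.Required ⟨j, ⟨1, by omega⟩⟩ :=
    Or.inl ⟨Nat.one_pos, by show 1 < W.picks j + 1; omega⟩
  have hpick2 : W.Required ⟨j, ⟨g + 1, by omega⟩⟩ :=
    Or.inl ⟨Nat.succ_pos g, by show g + 1 < W.picks j + 1; omega⟩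
  exact walk_S_invariant hw hcnt S hclose (hreq _ hpick1) (hreq _ hpick2)
    (show (⟨j, ⟨1, by omega⟩⟩ : W.V) ∈ S from ⟨rfl, show 1 ≤ g from hg1⟩)
    (fun hm => by have h2 : g + 1 ≤ g := hm.2; omega)

/-- If the gap of an aisle is interior, the bottom cross vertex has a positive horizontal edge. -/
lemma exists_outside_b {T : W.E → ℕ} (ht : W.IsTour T) (j : Fin W.n) (g : ℕ)
    (hg1 : 0 < g) (hg2 : g < W.picks j)
    (hz : T (Sum.inl ⟨j, ⟨g, by omega⟩⟩) = 0) :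
    ∃ e, 0 < T e ∧ ((W.ends e).1 = W.bV j ∨ (W.ends e).2 = W.bV j) ∧
      ∃ k', e = Sum.inr k' := by
  obtain ⟨hsub, hreq, l, hw, hcnt⟩ := ht
  by_contra hcon
  set S : Set W.V := {v : W.V | v.1 = j ∧ g + 1 ≤ v.2.val} with hS
  have hclose : ∀ e, 0 < T e → (((W.ends e).1 ∈ S) ↔ ((W.ends e).2 ∈ S)) := by
    intro e he
    rcases e with ⟨j', i⟩ | (k | k)
    · by_cases hjj : j' = j
      · subst hjj
        have hne : i.val ≠ g := by
          intro h
          have hEe : (Sum.inl ⟨j', i⟩ : W.E)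
              = Sum.inl ⟨j', (⟨g, by omega⟩ : Fin (W.picks j' + 1))⟩ :=
            E_vert_eq_iff.mpr ⟨rfl, h⟩
          have h0 : T (Sum.inl ⟨j', i⟩) = 0 := by rw [hEe]; exact hz
          omega
        have m1 : ((⟨j', i.castSucc⟩ : W.V) ∈ S) ↔ (j' = j' ∧ g + 1 ≤ i.val) := by
          rw [show ((⟨j', i.castSucc⟩ : W.V) ∈ S) ↔
            (j' = j' ∧ g + 1 ≤ (i.castSucc).val) from Iff.rfl, Fin.coe_castSucc]
        have m2 : ((⟨j', i.succ⟩ : W.V) ∈ S) ↔ (j' = j' ∧ g + 1 ≤ i.val + 1) := by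
          rw [show ((⟨j', i.succ⟩ : W.V) ∈ S) ↔
            (j' = j' ∧ g + 1 ≤ (i.succ).val) from Iff.rfl, Fin.val_succ]
        show ((⟨j', i.castSucc⟩ : W.V) ∈ S) ↔ ((⟨j', i.succ⟩ : W.V) ∈ S)
        rw [m1, m2]
        constructor <;> rintro ⟨-, h⟩ <;> exact ⟨rfl, by omega⟩
      · exact iff_of_false (fun hm => hjj hm.1) (fun hm => hjj hm.1)
    · have haV : ∀ j'' : Fin W.n, W.aV j'' ∉ S := by
        intro j'' hm
        have h2 : g + 1 ≤ 0 := hm.2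
        omega
      exact iff_of_false (haV _) (haV _)
    · by_cases hj : W.leftAisle k = j ∨ W.rightAisle k = j
      · exfalso
        rcases hj with hj | hj
        · exact hcon ⟨_, he, Or.inl (by show W.bV (W.leftAisle k) = _; rw [hj]),
            Sum.inr k, rfl⟩
        · exact hcon ⟨_, he, Or.inr (by show W.bV (W.rightAisle k) = _; rw [hj]),
            Sum.inr k, rfl⟩
      · push_neg at hj
        have m1 : W.bV (W.leftAisle k) ∉ S := fun hm => hj.1 (by exact hm.1)
        have m2 : W.bV (W.rightAisle k) ∉ S := fun hm => hj.2 (by exact hm.1)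
        exact iff_of_false m1 m2
  have hpick1 : W.Required ⟨j, ⟨g + 1, by omega⟩⟩ :=
    Or.inl ⟨Nat.succ_pos g, by show g + 1 < W.picks j + 1; omega⟩
  have hpick2 : W.Required ⟨j, ⟨1, by omega⟩⟩ :=
    Or.inl ⟨Nat.one_pos, by show 1 < W.picks j + 1; omega⟩
  exact walk_S_invariant hw hcnt S hclose (hreq _ hpick1) (hreq _ hpick2)
    (show (⟨j, ⟨g + 1, by omega⟩⟩ : W.V) ∈ S from ⟨rfl, show g + 1 ≤ g + 1 from le_refl _⟩)
    (fun hm => by have h2 : g + 1 ≤ 1 := hm.2; omega)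

end Warehouse
namespace Warehouse

variable {W : Warehouse}

/-- Classification of the vertical edge multiplicities of an aisle in any tour subgraph:
all ones, all twos, or twos with a single zero. -/
lemma aisle_classify {T : W.E → ℕ} (ht : W.IsTour T) (j : Fin W.n) :
    (∀ i : Fin (W.picks j + 1), T (Sum.inl ⟨j, i⟩) = 1) ∨
    (∀ i : Fin (W.picks j + 1), T (Sum.inl ⟨j, i⟩) = 2) ∨
    (∃ z : ℕ, ∃ hz : z < W.picks j + 1, T (Sum.inl ⟨j, ⟨z, hz⟩⟩) = 0 ∧
       ∀ p (hp : p < W.picks j + 1), p ≠ z → T (Sum.inl ⟨j, ⟨p, hp⟩⟩) = 2) := by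
  have ht' := ht
  obtain ⟨hsub, hreq, l, hwalk, hcnt⟩ := ht'
  set fT : ℕ → ℕ := fun p => if hp : p < W.picks j + 1 then T (Sum.inl ⟨j, ⟨p, hp⟩⟩) else 1
    with hfTdef
  have hfT : ∀ p (hp : p < W.picks j + 1), fT p = T (Sum.inl ⟨j, ⟨p, hp⟩⟩) :=
    fun p hp => dif_pos hp
  have hb : ∀ p (hp : p < W.picks j + 1), fT p ≤ 2 := by
    intro p hp
    rw [hfT p hp]
    exact hsub _
  have heven : ∀ v, W.deg T v % 2 = 0 := fun v => by
    rw [deg_eq_twice T l hwalk hcnt v]; omega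
  have hstep2 : ∀ q (hq : q + 1 < W.picks j + 1),
      (fT q + fT (q + 1)) % 2 = 0 ∧ 0 < fT q + fT (q + 1) := by
    intro q hq
    have hd : W.deg T ⟨j, ⟨q + 1, by omega⟩⟩
        = T (Sum.inl ⟨j, ⟨q, by omega⟩⟩) + T (Sum.inl ⟨j, ⟨q + 1, hq⟩⟩) :=
      deg_interior T j (q + 1) (by omega) (by omega)
    rw [hfT q (by omega), hfT (q + 1) hq]
    constructor
    · rw [← hd]
      exact heven _
    · rw [← hd]
      exact hreq _ (Or.inl ⟨Nat.succ_pos q, by show q + 1 < W.picks j + 1; omega⟩)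
  have hpar : ∀ p (hp : p < W.picks j + 1), fT p % 2 = fT 0 % 2 := by
    intro p
    induction p with
    | zero => intro _; rfl
    | succ q ih =>
        intro hp
        have h1 := ih (by omega)
        have h2 := (hstep2 q hp).1
        omega
  by_cases hodd : fT 0 % 2 = 1
  · left
    intro i
    have h1 := hpar i.val i.isLt
    have h2 := hb i.val i.isLt
    have h3 : fT i.val = 1 := by omega
    exact (hfT i.val i.isLt).symm.trans h3
  · have heq : ∀ p (hp : p < W.picks j + 1), fT p % 2 = 0 := by
      intro p hp
      have h1 := hpar p hp
      have h2 := hpar 0 (by omega)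
      omega
    by_cases hzero : ∃ p, ∃ _ : p < W.picks j + 1, fT p = 0
    · obtain ⟨z, hzlt, hz0⟩ := hzero
      right; right
      refine ⟨z, hzlt, (hfT z hzlt).symm.trans hz0, ?_⟩
      intro p hp hpz
      have h2 := hb p hp
      have h3 := heq p hp
      have h4 : fT p ≠ 0 := by
        intro h0
        have hvp : T (Sum.inl ⟨j, (⟨p, hp⟩ : Fin (W.picks j + 1))⟩) = 0 :=
          (hfT p hp).symm.trans h0
        have hvz : T (Sum.inl ⟨j, (⟨z, hzlt⟩ : Fin (W.picks j + 1))⟩) = 0 :=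
          (hfT z hzlt).symm.trans hz0
        rcases Nat.lt_or_ge p z with hlt | hge
        · exact aisle_zero_unique ht j p z hlt hzlt hvp hvz
        · exact aisle_zero_unique ht j z p (by omega) hp hvz hvp
      have h5 : fT p = 2 := by omega
      exact (hfT p hp).symm.trans h5
    · right; left
      intro i
      rw [not_exists] at hzero
      have hne : fT i.val ≠ 0 := fun h0 => hzero i.val ⟨i.isLt, h0⟩
      have h2 := hb i.val i.isLt
      have h3 := heq i.val i.isLt
      have h4 : fT i.val = 2 := by omega
      exact (hfT i.val i.isLt).symm.trans h4

end Warehouse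
namespace Warehouse

variable {W : Warehouse}

lemma closedwalk_rotate_one {l : List (W.E × Bool)} (hw : W.IsClosedWalk l) :
    W.IsClosedWalk (l.rotate 1) := by
  cases l with
  | nil => simpa using hw
  | cons a t =>
      rw [show (1 : ℕ) = 0 + 1 from rfl, List.rotate_cons_succ, List.rotate_zero]
      constructor
      · rw [List.Chain', List.isChain_append]
        refine ⟨(List.isChain_cons.mp hw.1).2, List.isChain_singleton a, ?_⟩
        intro x hx y hy
        simp only [List.head?_cons, Option.mem_def, Option.some_inj] at hy
        subst hy
        cases t with
        | nil => simp at hx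
        | cons b t' =>
            exact hw.2 a rfl x (by rw [List.getLast?_cons_cons]; exact hx)
      · intro s hs u hu
        cases t with
        | nil =>
            have hs' : a = s := by simpa using hs
            have hu' : a = u := by simpa using hu
            rw [← hs', ← hu']
            exact hw.2 a rfl a (by simp)
        | cons b t' =>
            have hs' : b = s := by simpa using hs
            rw [List.getLast?_concat] at hu
            have hu' : a = u := by simpa using hu
            rw [← hs', ← hu']
            exact (List.isChain_cons_cons.mp hw.1).1

lemma closedwalk_rotate {l : List (W.E × Bool)} (hw : W.IsClosedWalk l) (n : ℕ) :
    W.IsClosedWalk (l.rotate n) := by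
  induction n with
  | zero => simpa using hw
  | succ m ih =>
      rw [show m + 1 = m + 1 from rfl, ← List.rotate_rotate]
      exact closedwalk_rotate_one ih

lemma count_map_fst_rotate (l : List (W.E × Bool)) (n : ℕ) (e : W.E) :
    ((l.rotate n).map Prod.fst).count e = (l.map Prod.fst).count e :=
  ((List.rotate_perm l n).map Prod.fst).count_eq e

lemma exists_rotation_head {l : List (W.E × Bool)} {v : W.V}
    (hex : ∃ s ∈ l, W.stepSrc s = v) :
    ∃ n s, (l.rotate n).head? = some s ∧ W.stepSrc s = v := by
  obtain ⟨s, hs, hsv⟩ := hex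
  obtain ⟨i, hi, hgi⟩ := List.getElem_of_mem hs
  refine ⟨i, s, ?_, hsv⟩
  rw [List.rotate_eq_drop_append_take (le_of_lt hi), List.head?_append, List.head?_drop]
  simp [hgi, List.getElem?_eq_getElem hi]

lemma closedwalk_prepend {Ex l : List (W.E × Bool)} (hl : W.IsClosedWalk l) (hn : l ≠ [])
    (hE : Ex.Chain' (fun s t => W.stepDst s = W.stepSrc t)) {v : W.V}
    (hv : ∀ a ∈ l.head?, W.stepSrc a = v)
    (hEh : ∀ a ∈ Ex.head?, W.stepSrc a = v) (hEl : ∀ b ∈ Ex.getLast?, W.stepDst b = v) :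
    W.IsClosedWalk (Ex ++ l) := by
  cases Ex with
  | nil => simpa using hl
  | cons x Ex' =>
      constructor
      · rw [List.Chain', List.isChain_append]
        refine ⟨hE, hl.1, ?_⟩
        intro a ha b hb
        rw [hEl a ha, hv b hb]
      · intro s hs u hu
        have hs' : x = s := by simpa using hs
        rw [List.getLast?_append] at hu
        have hlast : ∃ b, l.getLast? = some b :=
          ⟨l.getLast hn, List.getLast?_eq_getLast hn⟩
        obtain ⟨b, hb⟩ := hlast
        rw [hb] at hu
        have hu' : b = u := by simpa using hu
        rw [← hs', ← hu']
        have h1 : W.stepDst b = W.stepSrc (l.head hn) :=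
          hl.2 (l.head hn) (List.head?_eq_head hn) b hb
        rw [h1, hv (l.head hn) (List.head?_eq_head hn), hEh x rfl]

lemma chain_of_pi_chain (π : W.V → W.V) (l : List (W.E × Bool))
    (hC : l.Chain' (fun s t => π (W.stepDst s) = π (W.stepSrc t)))
    (hfix : ∀ x ∈ l, π (W.stepSrc x) = W.stepSrc x ∧ π (W.stepDst x) = W.stepDst x) :
    l.Chain' (fun s t => W.stepDst s = W.stepSrc t) := by
  induction l with
  | nil => exact List.isChain_nil
  | cons a t ih =>
      rw [List.Chain', List.isChain_cons] at hC ⊢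
      refine ⟨?_, ih hC.2 (fun x hx => hfix x (List.mem_cons_of_mem _ hx))⟩
      intro y hy
      have h1 := hC.1 y hy
      have h2 := (hfix a (by simp)).2
      have h3 := (hfix y (List.mem_cons_of_mem _ (List.mem_of_mem_head? hy))).1
      rw [← h2, h1, h3]

lemma filt_aux (π : W.V → W.V) (p : W.E × Bool → Bool) (l : List (W.E × Bool))
    (h : l.Chain' (fun s t => π (W.stepDst s) = π (W.stepSrc t)))
    (hloop : ∀ x ∈ l, p x = false → π (W.stepSrc x) = π (W.stepDst x)) :
    (l.filter p).Chain' (fun s t => π (W.stepDst s) = π (W.stepSrc t)) ∧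
    (∀ a ∈ (l.filter p).head?, ∀ b ∈ l.head?, π (W.stepSrc b) = π (W.stepSrc a)) ∧
    (∀ a ∈ (l.filter p).getLast?, ∀ b ∈ l.getLast?, π (W.stepDst a) = π (W.stepDst b)) ∧
    (l.filter p = [] → ∀ a ∈ l.head?, ∀ b ∈ l.getLast?, π (W.stepSrc a) = π (W.stepDst b)) := by
  induction l with
  | nil => simp [List.Chain']
  | cons x xs ih =>
      have hx : ∀ y ∈ xs.head?, π (W.stepDst x) = π (W.stepSrc y) := (List.isChain_cons.mp h).1
      obtain ⟨C, H, L, D⟩ := ih (List.isChain_cons.mp h).2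
        (fun y hy hpy => hloop y (List.mem_cons_of_mem _ hy) hpy)
      by_cases hp : p x = true
      · rw [List.filter_cons, if_pos hp]
        refine ⟨?_, ?_, ?_, ?_⟩
        · rw [List.Chain', List.isChain_cons]
          refine ⟨?_, C⟩
          intro y hy
          have hxs_ne : xs ≠ [] := by
            intro hxe
            rw [hxe] at hy
            simp at hy
          have hbh := List.head?_eq_head hxs_ne
          have h1 := hx _ hbh
          have h2 := H y hy _ hbh
          rw [h1, h2]
        · intro a ha b hb
          simp only [List.head?_cons, Option.mem_def, Option.some_inj] at ha hb
          rw [← ha, ← hb]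
        · intro a ha b hb
          cases hxs : xs with
          | nil =>
              subst hxs
              simp only [List.filter_nil, List.getLast?_singleton, Option.mem_def,
                Option.some_inj] at ha hb
              rw [← ha, ← hb]
          | cons y xs' =>
              subst hxs
              rw [List.getLast?_cons_cons] at hb
              by_cases hfe : (y :: xs').filter p = []
              · rw [hfe, List.getLast?_singleton] at ha
                simp only [Option.mem_def, Option.some_inj] at ha
                subst ha
                have hbh := List.head?_eq_head (show (y :: xs') ≠ [] by simp)
                have h1 := hx _ hbh
                have h2 := D hfe _ hbh b hb
                rw [h1, h2]
              · obtain ⟨z, zs, hfc⟩ : ∃ z zs, (y :: xs').filter p = z :: zs := by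
                  cases hfc : (y :: xs').filter p with
                  | nil => exact absurd hfc hfe
                  | cons z zs => exact ⟨z, zs, rfl⟩
                rw [hfc, List.getLast?_cons_cons] at ha
                exact L a (by rw [hfc]; exact ha) b hb
        · intro habs
          simp at habs
      · have hpx : p x = false := by
          cases hpv : p x
          · rfl
          · exact absurd hpv hp
        rw [List.filter_cons, if_neg (by rw [hpx]; simp)]
        have hloopx := hloop x (by simp) hpx
        refine ⟨C, ?_, ?_, ?_⟩
        · intro a ha b hb
          simp only [List.head?_cons, Option.mem_def, Option.some_inj] at hb
          subst hb
          have hxs_ne : xs ≠ [] := by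
            intro hxe
            subst hxe
            simp at ha
          have hbh := List.head?_eq_head hxs_ne
          have h1 := hx _ hbh
          have h2 := H a ha _ hbh
          rw [hloopx, h1, h2]
        · intro a ha b hb
          cases hxs : xs with
          | nil =>
              subst hxs
              simp at ha
          | cons y xs' =>
              subst hxs
              rw [List.getLast?_cons_cons] at hb
              exact L a ha b hb
        · intro hfe a ha b hb
          simp only [List.head?_cons, Option.mem_def, Option.some_inj] at ha
          subst ha
          cases hxs : xs with
          | nil =>
              subst hxs
              simp only [List.getLast?_singleton, Option.mem_def, Option.some_inj] at hb
              subst hb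
              exact hloopx
          | cons y xs' =>
              subst hxs
              rw [List.getLast?_cons_cons] at hb
              have hbh := List.head?_eq_head (show (y :: xs') ≠ [] by simp)
              have h1 := hx _ hbh
              have h2 := D hfe _ hbh b hb
              rw [hloopx, h1, h2]

lemma closedwalk_filter (π : W.V → W.V) (p : W.E × Bool → Bool) {l : List (W.E × Bool)}
    (hw : W.IsClosedWalk l)
    (hloop : ∀ x ∈ l, p x = false → π (W.stepSrc x) = π (W.stepDst x))
    (hfix : ∀ x ∈ l, p x = true → π (W.stepSrc x) = W.stepSrc x ∧ π (W.stepDst x) = W.stepDst x) :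
    W.IsClosedWalk (l.filter p) := by
  have hπchain : l.Chain' (fun s t => π (W.stepDst s) = π (W.stepSrc t)) :=
    List.IsChain.imp (fun a b hab => congrArg π hab) hw.1
  obtain ⟨C, H, L, D⟩ := filt_aux π p l hπchain hloop
  have hmem_fix : ∀ x ∈ l.filter p, π (W.stepSrc x) = W.stepSrc x ∧ π (W.stepDst x) = W.stepDst x := by
    intro x hx
    rw [List.mem_filter] at hx
    exact hfix x hx.1 hx.2
  constructor
  · exact chain_of_pi_chain π _ C hmem_fix
  · intro s hs u hu
    have hfne : l.filter p ≠ [] := by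
      intro hfe
      rw [hfe] at hs
      simp at hs
    have hlne : l ≠ [] := by
      intro hle
      subst hle
      simp at hfne
    have h1 := H s hs _ (List.head?_eq_head hlne)
    have h2 := L u hu _ (List.getLast?_eq_getLast hlne)
    have h3 : W.stepDst (l.getLast hlne) = W.stepSrc (l.head hlne) :=
      hw.2 _ (List.head?_eq_head hlne) _ (List.getLast?_eq_getLast hlne)
    have h4 := (hmem_fix s (List.mem_of_mem_head? hs)).1
    have h5 := (hmem_fix u (List.mem_of_mem_getLast? hu)).2
    rw [← h5, h2, h3, h1, h4]

end Warehouse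
namespace Warehouse

variable {W : Warehouse}

open Classical in
lemma exists_excursion (j : Fin W.n) (p k : ℕ) (hpk : p + k ≤ W.picks j + 1) :
    ∃ D U : List (W.E × Bool),
      (∀ s ∈ D ++ U, ∃ i : Fin (W.picks j + 1), s.1 = Sum.inl ⟨j, i⟩) ∧
      D.Chain' (fun s t => W.stepDst s = W.stepSrc t) ∧
      U.Chain' (fun s t => W.stepDst s = W.stepSrc t) ∧
      (∀ a ∈ D.head?, W.stepSrc a = (⟨j, ⟨p, by omega⟩⟩ : W.V)) ∧
      (∀ b ∈ D.getLast?, W.stepDst b = (⟨j, ⟨p + k, by omega⟩⟩ : W.V)) ∧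
      (∀ a ∈ U.head?, W.stepSrc a = (⟨j, ⟨p + k, by omega⟩⟩ : W.V)) ∧
      (∀ b ∈ U.getLast?, W.stepDst b = (⟨j, ⟨p, by omega⟩⟩ : W.V)) ∧
      (D = [] ↔ k = 0) ∧ (U = [] ↔ k = 0) ∧
      (∀ e : W.E, ((D ++ U).map Prod.fst).count e =
        if ∃ i : Fin (W.picks j + 1), e = Sum.inl ⟨j, i⟩ ∧ p ≤ i.val ∧ i.val < p + k
        then 2 else 0) := by
  induction k with
  | zero =>
      refine ⟨[], [], by simp, List.isChain_nil, List.isChain_nil, by simp, by simp, by simp, by simp,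
        by simp, by simp, ?_⟩
      intro e
      rw [if_neg]
      · simp
      · rintro ⟨i, -, h1, h2⟩
        omega
  | succ k ih =>
      obtain ⟨D, U, hsup, hcD, hcU, hDf, hDl, hUf, hUl, hDe, hUe, hcnt⟩ := ih (by omega)
      set ek : W.E := Sum.inl ⟨j, ⟨p + k, by omega⟩⟩ with hek
      refine ⟨D ++ [(ek, true)], (ek, false) :: U, ?_, ?_, ?_, ?_, ?_, ?_, ?_, by simp, by simp, ?_⟩
      · intro s hs
        rcases List.mem_append.mp hs with hs1 | hs2
        · rcases List.mem_append.mp hs1 with h | h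
          · exact hsup s (List.mem_append.mpr (Or.inl h))
          · have hse : s = (ek, true) := by simpa using h
            exact ⟨⟨p + k, by omega⟩, by rw [hse]⟩
        · rcases List.mem_cons.mp hs2 with h | h
          · exact ⟨⟨p + k, by omega⟩, by rw [h]⟩
          · exact hsup s (List.mem_append.mpr (Or.inr h))
      · rw [List.Chain', List.isChain_append]
        refine ⟨hcD, List.isChain_singleton _, ?_⟩
        intro x hx y hy
        have hy' : (ek, true) = y := by simpa using hy
        rw [← hy', hDl x hx]
        rfl
      · rw [List.Chain', List.isChain_cons]
        refine ⟨?_, hcU⟩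
        intro y hy
        rw [hUf y hy]
        rfl
      · intro a ha
        cases hD : D with
        | nil =>
            have hk0 : k = 0 := hDe.mp hD
            subst hk0
            rw [hD] at ha
            have ha' : (ek, true) = a := by simpa using ha
            rw [← ha']
            rfl
        | cons d D' =>
            rw [hD] at ha
            have ha' : d = a := by simpa using ha
            rw [← ha']
            exact hDf d (by rw [hD]; simp)
      · intro b hb
        rw [List.getLast?_concat] at hb
        have hb' : (ek, true) = b := by simpa using hb
        rw [← hb']
        rfl
      · intro a ha
        have ha' : (ek, false) = a := by simpa using ha
        rw [← ha']
        rfl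
      · intro b hb
        cases hU : U with
        | nil =>
            have hk0 : k = 0 := hUe.mp hU
            subst hk0
            rw [hU] at hb
            have hb' : (ek, false) = b := by simpa using hb
            rw [← hb']
            rfl
        | cons u U' =>
            rw [hU] at hb
            rw [List.getLast?_cons_cons] at hb
            exact hUl b (by rw [hU]; rw [show (u :: U').getLast? = ((u :: U') : List _).getLast? from rfl]; exact hb)
      · intro e
        have hsplit : (((D ++ [(ek, true)]) ++ ((ek, false) :: U)).map Prod.fst).count e
            = ((D ++ U).map Prod.fst).count e + (if ek = e then 2 else 0) := by
          simp only [List.map_append, List.map_cons, List.map_singleton, List.count_append,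
            List.count_cons, List.count_singleton', List.count_nil]
          by_cases he : ek = e
          · simp [he]
            ring
          · simp [he, Ne.symm he]
        rw [hsplit, hcnt e]
        by_cases he : ek = e
        · rw [if_pos he, if_neg, if_pos]
          · exact ⟨⟨p + k, by omega⟩, by rw [← he], show p ≤ p + k by omega,
              show p + k < p + (k + 1) by omega⟩
          · rintro ⟨i, hei, h1, h2⟩
            rw [← he] at hei
            have h3 : i.val = p + k := (E_vert_eq_iff.mp hei.symm).2
            omega
        · rw [if_neg he, add_zero]
          by_cases hc : ∃ i : Fin (W.picks j + 1), e = Sum.inl ⟨j, i⟩ ∧ p ≤ i.val ∧ i.val < p + k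
          · obtain ⟨i, hei, h1, h2⟩ := hc
            rw [if_pos ⟨i, hei, h1, h2⟩, if_pos ⟨i, hei, h1, by omega⟩]
          · rw [if_neg hc, if_neg]
            rintro ⟨i, hei, h1, h2⟩
            by_cases hik : i.val = p + k
            · exact he (by rw [hei]; exact (E_vert_eq_iff.mpr ⟨rfl, hik⟩).symm)
            · exact hc ⟨i, hei, h1, by omega⟩

end Warehouse
namespace Warehouse

/-- Collapse the two pendant segments of aisle `j` (split at gap position `g`) to the
cross vertices. -/
def collapse (W : Warehouse) (j : Fin W.n) (g : ℕ) : W.V → W.V :=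
  fun v => if v.1 = j then (if v.2.val ≤ g then W.aV j else W.bV j) else v

/-- Keep the edges that are not vertical edges of aisle `j`. -/
def keepE (W : Warehouse) (j : Fin W.n) : W.E → Bool :=
  fun e => match e with
    | Sum.inl ⟨j', _⟩ => decide (j' ≠ j)
    | Sum.inr _ => true

variable {W : Warehouse}

lemma collapse_low {j : Fin W.n} {g : ℕ} (x : Fin (W.picks j + 2)) (hx : x.val ≤ g) :
    W.collapse j g ⟨j, x⟩ = W.aV j := by
  unfold collapse
  exact (if_pos rfl).trans (if_pos (show ((⟨j, x⟩ : W.V)).2.val ≤ g from hx))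

lemma collapse_high {j : Fin W.n} {g : ℕ} (x : Fin (W.picks j + 2)) (hx : g < x.val) :
    W.collapse j g ⟨j, x⟩ = W.bV j := by
  unfold collapse
  have h2 : ¬ x.val ≤ g := by omega
  exact (if_pos rfl).trans (if_neg h2)

lemma collapse_other {j : Fin W.n} {g : ℕ} (v : W.V) (hv : v.1 ≠ j) :
    W.collapse j g v = v := by
  unfold collapse
  rw [if_neg hv]

lemma collapse_aV {j : Fin W.n} {g : ℕ} (j'' : Fin W.n) :
    W.collapse j g (W.aV j'') = W.aV j'' := by
  by_cases h : j'' = j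
  · subst h
    exact collapse_low _ (by simp)
  · exact collapse_other _ h

lemma collapse_bV {j : Fin W.n} {g : ℕ} (hg : g < W.picks j + 1) (j'' : Fin W.n) :
    W.collapse j g (W.bV j'') = W.bV j'' := by
  rcases eq_or_ne j'' j with h | h
  · rw [h]
    have h2 : g < W.picks j + 1 := by omega
    exact collapse_high _ h2
  · exact collapse_other _ h

lemma keepE_inl {j j' : Fin W.n} {i : Fin (W.picks j' + 1)} :
    W.keepE j (Sum.inl ⟨j', i⟩) = decide (j' ≠ j) := rfl

lemma keepE_inr {j : Fin W.n} (x : Fin (W.n - 1) ⊕ Fin (W.n - 1)) :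
    W.keepE j (Sum.inr x) = true := rfl

lemma exists_src_step {l : List (W.E × Bool)} (hw : W.IsClosedWalk l) {e : W.E} {v : W.V}
    (hmem : e ∈ l.map Prod.fst) (hinc : (W.ends e).1 = v ∨ (W.ends e).2 = v) :
    ∃ s ∈ l, W.stepSrc s = v := by
  obtain ⟨s, hs, hse⟩ := List.mem_map.mp hmem
  have hsd : W.stepSrc s = v ∨ W.stepDst s = v := by
    rcases s with ⟨e', b⟩
    simp only at hse
    subst hse
    cases b
    · exact hinc.symm
    · exact hinc
  rcases hsd with h | h
  · exact ⟨s, hs, h⟩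
  · have h1 : 0 < (l.map W.stepDst).count v := by
      refine List.count_pos_iff.mpr ?_
      rw [← h]
      exact List.mem_map_of_mem (f := W.stepDst) hs
    rw [← count_src_eq_count_dst l hw] at h1
    obtain ⟨s', hs', hsv⟩ := List.mem_map.mp (List.count_pos_iff.mp h1)
    exact ⟨s', hs', hsv⟩

end Warehouse
namespace Warehouse

variable {W : Warehouse}

open Classical in
/-- Gap surgery: given a tour whose aisle `j` has a (doubled) interior gap at `g`, there is
a tour identical outside aisle `j` whose aisle `j` is doubled with gap exactly at `g'`. -/
lemma surgery {T : W.E → ℕ} (ht : W.IsTour T) (j : Fin W.n) {g : ℕ}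
    (hg1 : 0 < g) (hg2 : g < W.picks j)
    (hz : T (Sum.inl ⟨j, ⟨g, by omega⟩⟩) = 0)
    (g' : ℕ) (hg' : g' < W.picks j + 1) :
    ∃ T' : W.E → ℕ, W.IsTour T' ∧
      (∀ e : W.E, (∀ i : Fin (W.picks j + 1), e ≠ Sum.inl ⟨j, i⟩) → T' e = T e) ∧
      (∀ p (hp : p < W.picks j + 1), T' (Sum.inl ⟨j, ⟨p, hp⟩⟩) = if p = g' then 0 else 2) := by
  have ht0 := ht
  obtain ⟨hsub, hreq, l, hwalk, hcnt⟩ := ht0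
  obtain ⟨ea, hea_pos, hea_inc, ka, hka⟩ := exists_outside_a ht j g hg1 hg2 hz
  obtain ⟨eb, heb_pos, heb_inc, kb, hkb⟩ := exists_outside_b ht j g hg1 hg2 hz
  set l0 : List (W.E × Bool) := l.filter (fun s => W.keepE j s.1) with hl0
  have hloop : ∀ x ∈ l, (fun s : W.E × Bool => W.keepE j s.1) x = false →
      W.collapse j g (W.stepSrc x) = W.collapse j g (W.stepDst x) := by
    intro x hx hpx
    rcases x with ⟨e, b⟩
    rcases e with ⟨j', i⟩ | y
    swap
    · exact absurd hpx (by simp [keepE_inr])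
    · have hj' : j' = j := by
        have h1 : W.keepE j (Sum.inl ⟨j', i⟩) = false := hpx
        rw [keepE_inl] at h1
        simpa using h1
      subst hj'
      have hTpos : 0 < T (Sum.inl ⟨j', i⟩) := step_edge_pos hcnt hx
      have hig : i.val ≠ g := by
        intro h
        have hEe : (Sum.inl ⟨j', i⟩ : W.E) = Sum.inl ⟨j', ⟨g, by omega⟩⟩ :=
          E_vert_eq_iff.mpr ⟨rfl, h⟩
        have h0 : T (Sum.inl ⟨j', i⟩) = 0 := by rw [hEe]; exact hz
        omega
      have hcol : W.collapse j' g (⟨j', i.castSucc⟩ : W.V) = W.collapse j' g ⟨j', i.succ⟩ := by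
        rcases Nat.lt_or_ge i.val g with hlt | hge
        · have hc1 : i.val ≤ g := by omega
          have hc2 : i.val + 1 ≤ g := by omega
          rw [collapse_low i.castSucc hc1, collapse_low i.succ hc2]
        · have hc1 : g < i.val := by omega
          have hc2 : g < i.val + 1 := by omega
          rw [collapse_high i.castSucc hc1, collapse_high i.succ hc2]
      cases b
      · exact hcol.symm
      · exact hcol
  have hfix : ∀ x ∈ l, (fun s : W.E × Bool => W.keepE j s.1) x = true →
      W.collapse j g (W.stepSrc x) = W.stepSrc x ∧
      W.collapse j g (W.stepDst x) = W.stepDst x := by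
    intro x hx hpx
    rcases x with ⟨e, b⟩
    have hends : W.collapse j g (W.ends e).1 = (W.ends e).1 ∧
        W.collapse j g (W.ends e).2 = (W.ends e).2 := by
      rcases e with ⟨j', i⟩ | (k | k)
      · have hj' : j' ≠ j := by
          have h1 : W.keepE j (Sum.inl ⟨j', i⟩) = true := hpx
          rw [keepE_inl] at h1
          simpa using h1
        exact ⟨collapse_other _ hj', collapse_other _ hj'⟩
      · exact ⟨collapse_aV _, collapse_aV _⟩
      · exact ⟨collapse_bV (by omega) _, collapse_bV (by omega) _⟩
    cases b
    · exact ⟨hends.2, hends.1⟩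
    · exact hends
  have hwalk0 : W.IsClosedWalk l0 :=
    closedwalk_filter (W.collapse j g) (fun s => W.keepE j s.1) hwalk hloop hfix
  have hcnt0 : ∀ e, (l0.map Prod.fst).count e = if W.keepE j e then T e else 0 := by
    intro e
    have hmf : l0.map Prod.fst = (l.map Prod.fst).filter (W.keepE j) :=
      (List.filter_map (p := W.keepE j) (f := Prod.fst) (l := l)).symm
    rw [hmf]
    by_cases hk : W.keepE j e
    · rw [if_pos hk, List.count_filter hk, hcnt e]
    · rw [if_neg hk]
      exact List.count_eq_zero.mpr (fun hm => hk (List.of_mem_filter hm))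
  have hkeep_ea : W.keepE j ea = true := by rw [hka]; rfl
  have hkeep_eb : W.keepE j eb = true := by rw [hkb]; rfl
  have hea_mem : ea ∈ l0.map Prod.fst := by
    have h1 : 0 < (l0.map Prod.fst).count ea := by
      rw [hcnt0, if_pos hkeep_ea]
      exact hea_pos
    exact List.count_pos_iff.mp h1
  obtain ⟨na, sa, hna_head, hsa⟩ := exists_rotation_head (exists_src_step hwalk0 hea_mem hea_inc)
  set l1 := l0.rotate na with hl1
  have hwalk1 : W.IsClosedWalk l1 := closedwalk_rotate hwalk0 na
  have hl1ne : l1 ≠ [] := by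
    intro h
    rw [h] at hna_head
    simp at hna_head
  have hcnt1 : ∀ e, (l1.map Prod.fst).count e = (l0.map Prod.fst).count e :=
    fun e => count_map_fst_rotate l0 na e
  obtain ⟨DA, UA, hsupA, hcDA, hcUA, hDfA, hDlA, hUfA, hUlA, hDeA, hUeA, hcntA⟩ :=
    exists_excursion (W := W) j 0 g' (by omega)
  have haV0 : (⟨j, ⟨0, by omega⟩⟩ : W.V) = W.aV j := V_mk_eq_iff.mpr ⟨rfl, (Fin.val_zero _).symm⟩
  have hEAchain : (DA ++ UA).Chain' (fun s t => W.stepDst s = W.stepSrc t) := by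
    rw [List.Chain', List.isChain_append]
    refine ⟨hcDA, hcUA, ?_⟩
    intro x hx y hy
    rw [hDlA x hx, hUfA y hy]
  have hEAhead : ∀ a ∈ (DA ++ UA).head?, W.stepSrc a = W.aV j := by
    intro a ha
    cases hDA : DA with
    | nil =>
        have hg0 : g' = 0 := hDeA.mp hDA
        rw [hDA, hUeA.mpr hg0] at ha
        simp at ha
    | cons d D' =>
        rw [hDA, List.cons_append] at ha
        have ha' : d = a := by simpa using ha
        rw [← ha', ← haV0]
        exact hDfA d (by rw [hDA]; simp)
  have hEAlast : ∀ b ∈ (DA ++ UA).getLast?, W.stepDst b = W.aV j := by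
    intro b hb
    cases hUA : UA with
    | nil =>
        have hg0 : g' = 0 := hUeA.mp hUA
        rw [hDeA.mpr hg0, hUA] at hb
        simp at hb
    | cons u U' =>
        rw [hUA, List.getLast?_append] at hb
        obtain ⟨c, hc⟩ : ∃ c, (u :: U').getLast? = some c :=
          ⟨_, List.getLast?_eq_getLast (by simp)⟩
        rw [hc] at hb
        have hb' : c = b := by simpa using hb
        rw [← hb', ← haV0]
        exact hUlA c (by rw [hUA]; exact hc)
  set l2 := (DA ++ UA) ++ l1 with hl2
  have hwalk2 : W.IsClosedWalk l2 :=
    closedwalk_prepend hwalk1 hl1ne hEAchain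
      (fun a ha => by
        rw [hna_head] at ha
        have h' : sa = a := by simpa using ha
        rw [← h']
        exact hsa)
      hEAhead hEAlast
  have hcnt2 : ∀ e, (l2.map Prod.fst).count e
      = ((DA ++ UA).map Prod.fst).count e + (l0.map Prod.fst).count e := by
    intro e
    rw [hl2, List.map_append, List.count_append, hcnt1 e]
  have heb_mem2 : eb ∈ l2.map Prod.fst := by
    have h1 : 0 < (l2.map Prod.fst).count eb := by
      rw [hcnt2, hcnt0, if_pos hkeep_eb]
      omega
    exact List.count_pos_iff.mp h1
  obtain ⟨nb, sb, hnb_head, hsb⟩ := exists_rotation_head (exists_src_step hwalk2 heb_mem2 heb_inc)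
  set l3 := l2.rotate nb with hl3
  have hwalk3 : W.IsClosedWalk l3 := closedwalk_rotate hwalk2 nb
  have hl3ne : l3 ≠ [] := by
    intro h
    rw [h] at hnb_head
    simp at hnb_head
  have hcnt3 : ∀ e, (l3.map Prod.fst).count e = (l2.map Prod.fst).count e :=
    fun e => count_map_fst_rotate l2 nb e
  obtain ⟨DB, UB, hsupB, hcDB, hcUB, hDfB, hDlB, hUfB, hUlB, hDeB, hUeB, hcntB⟩ :=
    exists_excursion (W := W) j (g' + 1) (W.picks j - g') (by omega)
  have hbVp : (⟨j, ⟨(g' + 1) + (W.picks j - g'), by omega⟩⟩ : W.V) = W.bV j := by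
    have hvv : (g' + 1) + (W.picks j - g') = W.picks j + 1 := by omega
    exact V_mk_eq_iff.mpr ⟨rfl, hvv⟩
  have hEBchain : (UB ++ DB).Chain' (fun s t => W.stepDst s = W.stepSrc t) := by
    rw [List.Chain', List.isChain_append]
    refine ⟨hcUB, hcDB, ?_⟩
    intro x hx y hy
    rw [hUlB x hx, hDfB y hy]
  have hEBhead : ∀ a ∈ (UB ++ DB).head?, W.stepSrc a = W.bV j := by
    intro a ha
    cases hUB : UB with
    | nil =>
        have hg0 : W.picks j - g' = 0 := hUeB.mp hUB
        rw [hUB, hDeB.mpr hg0] at ha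
        simp at ha
    | cons u U' =>
        rw [hUB, List.cons_append] at ha
        have ha' : u = a := by simpa using ha
        rw [← ha', ← hbVp]
        exact hUfB u (by rw [hUB]; simp)
  have hEBlast : ∀ b ∈ (UB ++ DB).getLast?, W.stepDst b = W.bV j := by
    intro b hb
    cases hDB : DB with
    | nil =>
        have hg0 : W.picks j - g' = 0 := hDeB.mp hDB
        rw [hUeB.mpr hg0, hDB] at hb
        simp at hb
    | cons d D' =>
        rw [hDB, List.getLast?_append] at hb
        obtain ⟨c, hc⟩ : ∃ c, (d :: D').getLast? = some c :=
          ⟨_, List.getLast?_eq_getLast (by simp)⟩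
        rw [hc] at hb
        have hb' : c = b := by simpa using hb
        rw [← hb', ← hbVp]
        exact hDlB c (by rw [hDB]; exact hc)
  set l4 := (UB ++ DB) ++ l3 with hl4
  have hwalk4 : W.IsClosedWalk l4 :=
    closedwalk_prepend hwalk3 hl3ne hEBchain
      (fun a ha => by
        rw [hnb_head] at ha
        have h' : sb = a := by simpa using ha
        rw [← h']
        exact hsb)
      hEBhead hEBlast
  have hcnt4 : ∀ e, (l4.map Prod.fst).count e
      = ((DB ++ UB).map Prod.fst).count e + (((DA ++ UA).map Prod.fst).count e
        + (if W.keepE j e then T e else 0)) := by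
    intro e
    have hswap : ((UB ++ DB).map Prod.fst).count e = ((DB ++ UB).map Prod.fst).count e := by
      simp only [List.map_append, List.count_append]
      omega
    rw [hl4, List.map_append, List.count_append, hcnt3 e, hcnt2 e, hcnt0 e, hswap]
  -- value lemmas
  have hvertval : ∀ p (hp : p < W.picks j + 1) (E0 : W.E), E0 = Sum.inl ⟨j, ⟨p, hp⟩⟩ →
      (l4.map Prod.fst).count E0 = if p = g' then 0 else 2 := by
    intro p hp E0 hE0
    rw [hcnt4, hcntA _, hcntB _]
    have hkeepv : W.keepE j E0 = false := by
      rw [hE0, keepE_inl]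
      simp
    have hkz : (if W.keepE j E0 then T E0 else 0) = 0 := by
      rw [hkeepv]
      rfl
    rw [hkz]
    have hAval : (if ∃ i : Fin (W.picks j + 1), E0 = Sum.inl ⟨j, i⟩
          ∧ 0 ≤ i.val ∧ i.val < 0 + g' then 2 else 0) = if p < g' then 2 else 0 := by
      by_cases h : p < g'
      · rw [if_pos h, if_pos ⟨⟨p, hp⟩, hE0, Nat.zero_le _, show p < 0 + g' by omega⟩]
      · rw [if_neg h, if_neg]
        rintro ⟨i, hei, -, h2⟩
        have h3 : p = i.val := (E_vert_eq_iff.mp (hE0.symm.trans hei)).2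
        omega
    have hBval : (if ∃ i : Fin (W.picks j + 1), E0 = Sum.inl ⟨j, i⟩
          ∧ g' + 1 ≤ i.val ∧ i.val < (g' + 1) + (W.picks j - g') then 2 else 0)
        = if g' + 1 ≤ p then 2 else 0 := by
      by_cases h : g' + 1 ≤ p
      · rw [if_pos h, if_pos ⟨⟨p, hp⟩, hE0, show g' + 1 ≤ p from h,
          show p < (g' + 1) + (W.picks j - g') by omega⟩]
      · rw [if_neg h, if_neg]
        rintro ⟨i, hei, h1, -⟩
        have h3 : p = i.val := (E_vert_eq_iff.mp (hE0.symm.trans hei)).2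
        omega
    rw [hAval, hBval]
    split_ifs <;> omega
  have hotherval : ∀ e : W.E, (∀ i : Fin (W.picks j + 1), e ≠ Sum.inl ⟨j, i⟩) →
      (l4.map Prod.fst).count e = T e := by
    intro e he
    rw [hcnt4, hcntA _, hcntB _]
    have hA0 : (if ∃ i : Fin (W.picks j + 1), e = Sum.inl ⟨j, i⟩
          ∧ 0 ≤ i.val ∧ i.val < 0 + g' then 2 else 0) = 0 := by
      rw [if_neg]
      rintro ⟨i, hei, -, -⟩
      exact he i hei
    have hB0 : (if ∃ i : Fin (W.picks j + 1), e = Sum.inl ⟨j, i⟩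
          ∧ g' + 1 ≤ i.val ∧ i.val < (g' + 1) + (W.picks j - g') then 2 else 0) = 0 := by
      rw [if_neg]
      rintro ⟨i, hei, -, -⟩
      exact he i hei
    have hkeep : W.keepE j e = true := by
      rcases e with ⟨j', i⟩ | y
      · rw [keepE_inl]
        have hj' : j' ≠ j := by
          intro h
          exact he ⟨i.val, h ▸ i.isLt⟩ (E_vert_eq_iff.mpr ⟨h, rfl⟩)
        simpa using hj'
      · rfl
    rw [hA0, hB0, if_pos hkeep]
    omega
  refine ⟨fun e => (l4.map Prod.fst).count e, ⟨?_, ?_, l4, hwalk4, fun e => rfl⟩,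
    hotherval, fun p hp => hvertval p hp (Sum.inl ⟨j, ⟨p, hp⟩⟩) rfl⟩
  · -- IsSub
    intro e
    show (l4.map Prod.fst).count e ≤ 2
    rcases e with ⟨j', i⟩ | y
    · by_cases hj : j' = j
      · subst hj
        have h2 := hvertval i.val i.isLt (Sum.inl ⟨j', i⟩) rfl
        rw [h2]
        split_ifs <;> omega
      · rw [hotherval (Sum.inl ⟨j', i⟩) (fun i' heq => hj (E_vert_eq_iff.mp heq).1)]
        exact hsub _
    · rw [hotherval (Sum.inr y) (fun i' heq => by cases heq)]
      exact hsub _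
  · -- required coverage
    intro v hv
    obtain ⟨jv, xv⟩ := v
    by_cases hvj : jv = j
    · subst hvj
      rcases Nat.eq_zero_or_pos xv.val with hx0 | hxpos
      · have hva : (⟨jv, xv⟩ : W.V) = W.aV jv :=
          V_mk_eq_iff.mpr ⟨rfl, by rw [Fin.val_zero]; exact hx0⟩
        rw [hva]
        refine deg_pos_of_incident ?_ hea_inc
        show 0 < (l4.map Prod.fst).count ea
        rw [hotherval ea (fun i' heq => by rw [hka] at heq; cases heq)]
        exact hea_pos
      · rcases Nat.lt_or_ge xv.val (W.picks jv + 1) with hxint | hxtop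
        · set E1 : W.E := Sum.inl ⟨jv, ⟨xv.val - 1, by omega⟩⟩ with hE1
          set E2 : W.E := Sum.inl ⟨jv, ⟨xv.val, by omega⟩⟩ with hE2
          have h1 := hvertval (xv.val - 1) (by omega) E1 hE1
          have h2 := hvertval xv.val (by omega) E2 hE2
          have hd : W.deg (fun e => (l4.map Prod.fst).count e) ⟨jv, xv⟩
              = (l4.map Prod.fst).count E1 + (l4.map Prod.fst).count E2 :=
            deg_interior _ jv xv.val hxpos hxint
          rw [hd]
          split_ifs at h1 h2 <;> omega
        · have hvb : (⟨jv, xv⟩ : W.V) = W.bV jv := by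
            have hxv : xv.val = W.picks jv + 1 := by
              have := xv.isLt
              omega
            exact V_mk_eq_iff.mpr ⟨rfl, hxv⟩
          rw [hvb]
          refine deg_pos_of_incident ?_ heb_inc
          show 0 < (l4.map Prod.fst).count eb
          rw [hotherval eb (fun i' heq => by rw [hkb] at heq; cases heq)]
          exact heb_pos
    · obtain ⟨e0, he0p, he0i⟩ := exists_incident_of_deg_pos (hreq ⟨jv, xv⟩ hv)
      refine deg_pos_of_incident ?_ he0i
      show 0 < (l4.map Prod.fst).count e0
      rw [hotherval e0 ?_]
      · exact he0p
      · intro i' heq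
        rw [heq] at he0i
        rcases he0i with h | h
        · exact hvj (V_mk_eq_iff.mp h).1.symm
        · exact hvj (V_mk_eq_iff.mp h).1.symm

end Warehouse
namespace Warehouse

variable {W : Warehouse}

/-- A minimum-length tour subgraph exists. -/
lemma exists_min_tour (htour : ∃ T : W.E → ℕ, W.IsTour T) :
    ∃ T, W.IsTour T ∧ ∀ T'', W.IsTour T'' → W.length T ≤ W.length T'' := by
  classical
  set S : Finset (W.E → ℕ) := Finset.image (fun f : W.E → Fin 3 => fun e => (f e : ℕ))
    Finset.univ with hS
  have hmem : ∀ T : W.E → ℕ, W.IsTour T → T ∈ S := by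
    intro T hT
    refine Finset.mem_image.mpr ⟨fun e => ⟨T e, ?_⟩, Finset.mem_univ _, ?_⟩
    · have := hT.1 e
      omega
    · funext e
      rfl
  obtain ⟨T0, hT0⟩ := htour
  obtain ⟨T, hTmem, hTmin⟩ := Finset.exists_min_image
    (S.filter (fun T => W.IsTour T)) W.length
    ⟨T0, Finset.mem_filter.mpr ⟨hmem T0 hT0, hT0⟩⟩
  exact ⟨T, (Finset.mem_filter.mp hTmem).2,
    fun T'' h'' => hTmin T'' (Finset.mem_filter.mpr ⟨hmem T'' h'', h''⟩)⟩

/-- The length comparison for a gap-surgery replacement. -/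
lemma surgery_length_le {T T' : W.E → ℕ} (j : Fin W.n) {z : ℕ} (hzlt : z < W.picks j + 1)
    (hz0 : T (Sum.inl ⟨j, ⟨z, hzlt⟩⟩) = 0)
    (hall : ∀ p (hp : p < W.picks j + 1), p ≠ z → T (Sum.inl ⟨j, ⟨p, hp⟩⟩) = 2)
    (hzbad : z ≠ (W.gapIdx j).val)
    (hother : ∀ e : W.E, (∀ i : Fin (W.picks j + 1), e ≠ Sum.inl ⟨j, i⟩) → T' e = T e)
    (hvert : ∀ p (hp : p < W.picks j + 1),
      T' (Sum.inl ⟨j, ⟨p, hp⟩⟩) = if p = (W.gapIdx j).val then 0 else 2) :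
    W.length T' ≤ W.length T := by
  set Eg : W.E := Sum.inl ⟨j, ⟨z, hzlt⟩⟩ with hEg
  set Eg' : W.E := Sum.inl ⟨j, W.gapIdx j⟩ with hEg'
  have hne : Eg ≠ Eg' := by
    intro h
    have h2 : z = (W.gapIdx j).val := (E_vert_eq_iff.mp h).2
    exact hzbad h2
  have hT'g : T' Eg = 2 := by
    have := hvert z hzlt
    rw [if_neg hzbad] at this
    exact this
  have hTg' : T Eg' = 2 := hall (W.gapIdx j).val (W.gapIdx j).isLt (fun h => hzbad h.symm)
  have hT'g' : T' Eg' = 0 := by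
    have h2 := hvert (W.gapIdx j).val (W.gapIdx j).isLt
    rw [if_pos rfl] at h2
    exact h2
  have hEq : ∀ e ∈ Finset.univ, e ∉ ({Eg, Eg'} : Finset W.E) →
      ((T e : ℝ) - (T' e : ℝ)) * W.elen e = 0 := by
    intro e _ hmem
    simp only [Finset.mem_insert, Finset.mem_singleton] at hmem
    push_neg at hmem
    have hTT : T' e = T e := by
      rcases e with ⟨j', i⟩ | y
      · by_cases hj : j' = j
        · subst hj
          have hiz : i.val ≠ z := by
            intro h
            exact hmem.1 (E_vert_eq_iff.mpr ⟨rfl, h⟩)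
          have hig : i.val ≠ (W.gapIdx j').val := by
            intro h
            exact hmem.2 (E_vert_eq_iff.mpr ⟨rfl, h⟩)
          have h1 : T' (Sum.inl ⟨j', i⟩) = 2 := by
            have := hvert i.val i.isLt
            rw [if_neg hig] at this
            exact this
          have h2 : T (Sum.inl ⟨j', i⟩) = 2 := hall i.val i.isLt hiz
          rw [h1, h2]
        · exact hother _ (fun i' heq => hj (E_vert_eq_iff.mp heq).1)
      · exact hother _ (fun i' heq => by cases heq)
    rw [hTT, sub_self, zero_mul]
  have hdiff : W.length T - W.length T' = ∑ e : W.E, ((T e : ℝ) - (T' e : ℝ)) * W.elen e := by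
    unfold length
    rw [← Finset.sum_sub_distrib]
    exact Finset.sum_congr rfl fun e _ => by ring
  have hpair : ∑ e : W.E, ((T e : ℝ) - (T' e : ℝ)) * W.elen e
      = ((T Eg : ℝ) - (T' Eg : ℝ)) * W.elen Eg + ((T Eg' : ℝ) - (T' Eg' : ℝ)) * W.elen Eg' := by
    rw [← Finset.sum_subset (Finset.subset_univ ({Eg, Eg'} : Finset W.E)) hEq,
      Finset.sum_pair hne]
  have hlen1 : W.elen Eg = W.vlen j ⟨z, hzlt⟩ := rfl
  have hlen2 : W.elen Eg' = W.vlen j (W.gapIdx j) := rfl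
  have hspec := W.gapIdx_spec j ⟨z, hzlt⟩
  have h0 : (0 : ℝ) ≤ W.length T - W.length T' := by
    rw [hdiff, hpair, hz0, hT'g, hTg', hT'g', hlen1, hlen2]
    push_cast
    nlinarith [hspec]
  linarith

/-- Main induction: there is a minimum tour whose aisles in `s` all carry configurations. -/
lemma main_induction (htour : ∃ T : W.E → ℕ, W.IsTour T) (s : Finset (Fin W.n)) :
    ∃ T, W.IsTour T ∧ (∀ T'', W.IsTour T'' → W.length T ≤ W.length T'') ∧
      ∀ j ∈ s, ∃ c : VCName, ∀ i : Fin (W.picks j + 1),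
        T (Sum.inl ⟨j, i⟩) = W.vconfFun j c i := by
  classical
  induction s using Finset.induction_on with
  | empty =>
      obtain ⟨T, hT, hmin⟩ := exists_min_tour htour
      exact ⟨T, hT, hmin, fun j hj => absurd hj (Finset.notMem_empty j)⟩
  | insert a s hnotmem ih =>
      obtain ⟨T, hT, hmin, hconf⟩ := ih
      rcases aisle_classify hT a with hone | htwo | ⟨z, hzlt, hz0, hall⟩
      · exact ⟨T, hT, hmin, fun j hj => by
          rcases Finset.mem_insert.mp hj with rfl | hj
          · exact ⟨VCName.onepass, fun i => (hone i).trans rfl⟩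
          · exact hconf j hj⟩
      · exact ⟨T, hT, hmin, fun j hj => by
          rcases Finset.mem_insert.mp hj with rfl | hj
          · exact ⟨VCName.twopass, fun i => (htwo i).trans rfl⟩
          · exact hconf j hj⟩
      · -- helper to read off values of T on aisle a
        have hTval : ∀ i : Fin (W.picks a + 1),
            T (Sum.inl ⟨a, i⟩) = if i.val = z then 0 else 2 := by
          intro i
          by_cases hiz : i.val = z
          · rw [if_pos hiz]
            have hEe : (Sum.inl ⟨a, i⟩ : W.E) = Sum.inl ⟨a, ⟨z, hzlt⟩⟩ :=
              E_vert_eq_iff.mpr ⟨rfl, hiz⟩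
            rw [hEe]
            exact hz0
          · rw [if_neg hiz]
            exact hall i.val i.isLt hiz
        by_cases hz0' : z = 0
        · refine ⟨T, hT, hmin, fun j hj => ?_⟩
          rcases Finset.mem_insert.mp hj with rfl | hj
          · refine ⟨VCName.bottom, fun i => ?_⟩
            rw [hTval i]
            show _ = if 1 ≤ i.val then 2 else 0
            subst hz0'
            by_cases h1 : i.val = 0
            · rw [if_pos h1, if_neg (by omega)]
            · rw [if_neg h1, if_pos (by omega)]
          · exact hconf j hj
        by_cases hztop : z = W.picks a
        · refine ⟨T, hT, hmin, fun j hj => ?_⟩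
          rcases Finset.mem_insert.mp hj with rfl | hj
          · refine ⟨VCName.top, fun i => ?_⟩
            rw [hTval i]
            show _ = if i.val < W.picks j then 2 else 0
            subst hztop
            have hi := i.isLt
            by_cases h1 : i.val = W.picks j
            · rw [if_pos h1, if_neg (by omega)]
            · rw [if_neg h1, if_pos (by omega)]
          · exact hconf j hj
        by_cases hzgap : z = (W.gapIdx a).val
        · refine ⟨T, hT, hmin, fun j hj => ?_⟩
          rcases Finset.mem_insert.mp hj with rfl | hj
          · refine ⟨VCName.gap, fun i => ?_⟩
            rw [hTval i]
            show _ = if i = W.gapIdx j then 0 else 2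
            subst hzgap
            by_cases h1 : i = W.gapIdx j
            · rw [if_pos (by rw [h1]), if_pos h1]
            · rw [if_neg (fun h => h1 (Fin.ext h)), if_neg h1]
          · exact hconf j hj
        · -- surgery case
          have hzpos : 0 < z := by omega
          have hzlt2 : z < W.picks a := by omega
          obtain ⟨T', hT', hother, hvert⟩ :=
            surgery hT a hzpos hzlt2 hz0 (W.gapIdx a).val (W.gapIdx a).isLt
          have hlen : W.length T' ≤ W.length T :=
            surgery_length_le a hzlt hz0 hall hzgap hother
              (fun p hp => hvert p hp)
          refine ⟨T', hT', fun T'' h'' => le_trans hlen (hmin T'' h''), fun j hj => ?_⟩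
          rcases Finset.mem_insert.mp hj with rfl | hj
          · refine ⟨VCName.gap, fun i => ?_⟩
            have h2 := hvert i.val i.isLt
            have h3 : T' (Sum.inl ⟨j, i⟩) = if i.val = (W.gapIdx j).val then 0 else 2 := h2
            rw [h3]
            show _ = if i = W.gapIdx j then 0 else 2
            by_cases h1 : i = W.gapIdx j
            · rw [if_pos (by rw [h1]), if_pos h1]
            · rw [if_neg (fun h => h1 (Fin.ext h)), if_neg h1]
          · obtain ⟨c, hc⟩ := hconf j hj
            refine ⟨c, fun i => ?_⟩
            rw [← hc i]
            exact hother _ (fun i' heq => hnotmem (by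
              have hja := (E_vert_eq_iff.mp heq).1
              rw [← hja]
              exact hj))
end Warehouse


/-- if `P` contains a pick vertex and `G` admits a tour subgraph, then
there is a minimum-length tour subgraph whose vertical edges in every aisle form one of
the six configurations and whose horizontal edges between consecutive aisles form one of
the five configurations. -/
theorem stmt3 (W : Warehouse) (hpick : ∃ v : W.V, W.IsPick v)
    (htour : ∃ T : W.E → ℕ, W.IsTour T) :
    ∃ T : W.E → ℕ, W.IsTour T ∧ (∀ T' : W.E → ℕ, W.IsTour T' → W.length T ≤ W.length T') ∧
      (∀ j : Fin W.n, ∃ c : VCName, ∀ i : Fin (W.picks j + 1),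
        T (Sum.inl ⟨j, i⟩) = W.vconfFun j c i) ∧
      (∀ k : Fin (W.n - 1), ∃ h : HCName,
        T (Sum.inr (Sum.inl k)) = hcA h ∧ T (Sum.inr (Sum.inr k)) = hcB h) := by
  obtain ⟨T, hT, hmin, hconf⟩ := Warehouse.main_induction htour Finset.univ
  refine ⟨T, hT, hmin, fun j => hconf j (Finset.mem_univ j), fun k => ?_⟩
  have hpar := Warehouse.horiz_parity hT k
  have ha := hT.1 (Sum.inr (Sum.inl k))
  have hb := hT.1 (Sum.inr (Sum.inr k))
  have hcases : (T (Sum.inr (Sum.inl k)) = 0 ∧ T (Sum.inr (Sum.inr k)) = 0) ∨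
      (T (Sum.inr (Sum.inl k)) = 1 ∧ T (Sum.inr (Sum.inr k)) = 1) ∨
      (T (Sum.inr (Sum.inl k)) = 2 ∧ T (Sum.inr (Sum.inr k)) = 0) ∨
      (T (Sum.inr (Sum.inl k)) = 0 ∧ T (Sum.inr (Sum.inr k)) = 2) ∨
      (T (Sum.inr (Sum.inl k)) = 2 ∧ T (Sum.inr (Sum.inr k)) = 2) := by
    omega
  rcases hcases with h | h | h | h | h
  · exact ⟨HCName.h00, h.1, h.2⟩
  · exact ⟨HCName.h11, h.1, h.2⟩
  · exact ⟨HCName.h20, h.1, h.2⟩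
  · exact ⟨HCName.h02, h.1, h.2⟩
  · exact ⟨HCName.h22, h.1, h.2⟩
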